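/- arXiv:2010.15345 — 3 statements merged into one kernel-verified Lean document; each statement's English description precedes it below -/
import Mathlib

section
/- (Corollary 3.12) Let 0 ≤ ζ < 1 and let f(z) = z + Σ_{n≥2} aₙ zⁿ belong to the class B_Σ(1, ζ). Assume Υ₂ > 0 and Υ₃ > 0. Then |a₂| ≤ √( 2(1−ζ)/(3Υ₃·C(δ,3)) ) and |a₃| ≤ 2(1−ζ)/(3Υ₃·C(δ,3)) + ( (1−ζ)/(Υ₂·C(δ,2)) )². -/
open Complex

noncomputable section

/-- The open unit disk in ℂ. -/
def unitDisk : Set ℂ := Metric.ball 0 1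

/-- Υₙ = (λ(α+β−1)(n−1))^k. -/
def Ups (lam al be : ℝ) (k n : ℕ) : ℝ := (lam * (al + be - 1) * ((n : ℝ) - 1)) ^ k

/-- C(δ,n) = Γ(n+δ)/(Γ(n)·Γ(δ+1)). -/
def Cdel (d : ℝ) (n : ℕ) : ℝ :=
  Real.Gamma ((n : ℝ) + d) / (Real.Gamma (n : ℝ) * Real.Gamma (d + 1))

/-- The operator D applied to a function with Taylor coefficients `a`
(where `a 0 = 0`, `a 1 = 1`): (Df)(z) = z + Σ_{n≥2} Υₙ·C(δ,n)·aₙ zⁿ. -/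
def Dop (lam al be d : ℝ) (k : ℕ) (a : ℕ → ℂ) : ℂ → ℂ := fun z =>
  z + ∑' n : ℕ, if 2 ≤ n then (Ups lam al be k n : ℂ) * (Cdel d n : ℂ) * a n * z ^ n else 0

/-- Subordination F ≺ G on the unit disk. -/
def Subord (F G : ℂ → ℂ) : Prop :=
  ∃ u : ℂ → ℂ, AnalyticOnNhd ℂ u unitDisk ∧ u 0 = 0 ∧
    (∀ z ∈ unitDisk, ‖u z‖ < 1) ∧ ∀ z ∈ unitDisk, F z = G (u z)

/-- z ↦ (z·F′(z)/F(z))·((F(z)/z)^γ), with the value 1 at the origin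
(principal-branch complex power). -/
def bazFun (g : ℝ) (F : ℂ → ℂ) : ℂ → ℂ := fun z =>
  if z = 0 then 1 else (z * deriv F z / F z) * ((F z / z) ^ (g : ℂ))

/-- `f` is analytic on the unit disk, normalized, with Taylor coefficients `a`
(`a 0 = 0`, `a 1 = 1`). -/
def IsInA (f : ℂ → ℂ) (a : ℕ → ℂ) : Prop :=
  AnalyticOnNhd ℂ f unitDisk ∧ a 0 = 0 ∧ a 1 = 1 ∧
    ∀ z ∈ unitDisk, HasSum (fun n => a n * z ^ n) (f z)

/-- Membership of `f` (with coefficients `a`, and inverse `g` with coefficients `b`)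
in the class B_Σ(γ, φ). -/
def MemB (lam al be d : ℝ) (k : ℕ) (g : ℝ) (φ : ℂ → ℂ)
    (f gf : ℂ → ℂ) (a b : ℕ → ℂ) : Prop :=
  IsInA f a ∧ Set.InjOn f unitDisk ∧
  IsInA gf b ∧ Set.InjOn gf unitDisk ∧
  (∀ w : ℂ, ‖w‖ < 1 / 4 → f (gf w) = w) ∧
  b 2 = -a 2 ∧ b 3 = 2 * a 2 ^ 2 - a 3 ∧
  (∀ z ∈ unitDisk, z ≠ 0 → Dop lam al be d k a z ≠ 0) ∧
  (∀ z ∈ unitDisk, z ≠ 0 → Dop lam al be d k b z ≠ 0) ∧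
  Subord (bazFun g (Dop lam al be d k a)) φ ∧
  Subord (bazFun g (Dop lam al be d k b)) φ

section helpers

open Metric

lemma unitDisk_eq : unitDisk = Metric.ball (0:ℂ) 1 := rfl

lemma iteratedDeriv_eq_coeff {F : ℂ → ℂ} {p : FormalMultilinearSeries ℂ ℂ ℂ}
    (h : HasFPowerSeriesAt F p 0) (n : ℕ) :
    iteratedDeriv n F 0 = (Nat.factorial n : ℂ) * p.coeff n := by
  obtain ⟨r, hr⟩ := h
  have h2 := hr.factorial_smul (1 : ℂ) n
  rw [iteratedDeriv_eq_iteratedFDeriv, ← h2]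
  rw [FormalMultilinearSeries.coeff, nsmul_eq_mul]
  norm_num

lemma Cdel_pos {d : ℝ} (hd : 0 ≤ d) {n : ℕ} (hn : 1 ≤ n) : 0 < Cdel d n := by
  have h1 : (0:ℝ) < n := by exact_mod_cast hn
  exact div_pos (Real.Gamma_pos_of_pos (by linarith))
    (mul_pos (Real.Gamma_pos_of_pos h1) (Real.Gamma_pos_of_pos (by linarith)))

lemma Cdel_succ {d : ℝ} (hd : 0 ≤ d) {n : ℕ} (hn : 1 ≤ n) :
    Cdel d (n + 1) = Cdel d n * (((n : ℝ) + d) / n) := by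
  have h1 : (0:ℝ) < n := by exact_mod_cast hn
  have hG1 : Real.Gamma ((n:ℝ) + 1 + d) = ((n:ℝ) + d) * Real.Gamma ((n:ℝ) + d) := by
    rw [show (n:ℝ) + 1 + d = ((n:ℝ) + d) + 1 by ring, Real.Gamma_add_one (by linarith)]
  have hG2 : Real.Gamma ((n:ℝ) + 1) = (n:ℝ) * Real.Gamma (n:ℝ) := by
    rw [Real.Gamma_add_one (ne_of_gt h1)]
  have hGn : Real.Gamma (n:ℝ) ≠ 0 := ne_of_gt (Real.Gamma_pos_of_pos h1)
  have hGd : Real.Gamma (d + 1) ≠ 0 := ne_of_gt (Real.Gamma_pos_of_pos (by linarith))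
  rw [Cdel, Cdel]
  push_cast
  rw [hG1, hG2]
  field_simp

lemma Cdel_le {d : ℝ} (hd : 0 ≤ d) : ∀ n : ℕ, 1 ≤ n → Cdel d n ≤ (1 + d) ^ n := by
  intro n
  induction n with
  | zero => intro h; omega
  | succ m ih =>
    intro _
    rcases Nat.eq_or_lt_of_le (Nat.one_le_iff_ne_zero.mpr (Nat.succ_ne_zero m)) with h | h
    · -- m + 1 = 1
      have hm : m = 0 := by omega
      subst hm
      rw [Cdel]
      norm_num [Real.Gamma_one]
      rw [show (1:ℝ) + d = d + 1 by ring]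
      rw [div_self (ne_of_gt (Real.Gamma_pos_of_pos (by linarith)))]
      linarith
    · have hm : 1 ≤ m := by omega
      rw [Cdel_succ hd hm]
      have h1 : (0:ℝ) < m := by exact_mod_cast hm
      have h2 : ((m:ℝ) + d) / m ≤ 1 + d := by
        rw [div_le_iff₀ h1]
        have : (1:ℝ) ≤ m := by exact_mod_cast hm
        nlinarith
      have h3 := ih hm
      have h4 := le_of_lt (Cdel_pos hd hm)
      calc Cdel d m * (((m:ℝ) + d) / m) ≤ (1 + d)^m * (1 + d) := by
            apply mul_le_mul h3 h2 (by positivity) (by positivity)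
        _ = (1 + d)^(m+1) := by ring

end helpers

section key

open Metric Filter
open scoped ENNReal NNReal

lemma schwarz_coeff_two {u : ℂ → ℂ} (hu : AnalyticOnNhd ℂ u (ball 0 1)) (h0 : u 0 = 0)
    (hb : ∀ z ∈ ball (0:ℂ) 1, ‖(u z)‖ < 1) :
    ‖(iteratedDeriv 2 u 0 / 2 + (deriv u 0) ^ 2)‖ ≤ 1 := by
  have hball : (0:ℂ) ∈ ball (0:ℂ) 1 := mem_ball_self one_pos
  set v := dslope u 0 with hvdef
  have hdu : DifferentiableOn ℂ u (ball 0 1) := hu.differentiableOn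
  have hmaps : Set.MapsTo u (ball (0:ℂ) 1) (ball (u 0) 1) := by
    intro z hz; rw [h0]
    exact mem_ball_zero_iff.2 (by simpa using hb z hz)
  have hv_le : ∀ z ∈ ball (0:ℂ) 1, ‖v z‖ ≤ 1 := fun z hz => by
    simpa using Complex.norm_dslope_le_div_of_mapsTo_ball hdu (hmaps.mono_right ball_subset_closedBall) hz
  obtain ⟨p, hp⟩ := hu 0 hball
  have hvat0 : AnalyticAt ℂ v 0 := (hp.has_fpower_series_dslope_fslope).analyticAt
  have hvan : AnalyticOnNhd ℂ v (ball 0 1) := by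
    intro z hz
    rcases eq_or_ne z 0 with rfl | hz0
    · exact hvat0
    · have h1 : AnalyticAt ℂ (fun w => u w * w⁻¹) z :=
        (hu z hz).mul ((analyticAt_id).inv hz0)
      apply h1.congr
      filter_upwards [compl_singleton_mem_nhds hz0] with w hw
      rw [hvdef, dslope_of_ne u hw, slope_def_field, h0]
      simp [div_eq_mul_inv]
  have hv0 : v 0 = deriv u 0 := dslope_same u 0
  have hc2 : deriv v 0 = p.coeff 2 := by
    rw [hp.has_fpower_series_dslope_fslope.deriv]
    exact FormalMultilinearSeries.coeff_fslope
  have hiter : iteratedDeriv 2 u 0 / 2 = p.coeff 2 := by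
    have h3 := iteratedDeriv_eq_coeff hp 2
    rw [h3]; norm_num [Nat.factorial]
  have key : ‖(deriv v 0)‖ ≤ 1 - ‖(v 0)‖ ^ 2 := by
    by_cases hlt : ∀ z ∈ ball (0:ℂ) 1, ‖v z‖ < 1
    · -- Möbius trick
      have hlt0 : ‖v 0‖ < 1 := hlt 0 hball
      set c := v 0 with hcdef
      set κ := (starRingEnd ℂ) c with hκdef
      have habsc : ‖c‖ < 1 := hlt0
      have hden : ∀ z ∈ ball (0:ℂ) 1, 1 - κ * v z ≠ 0 := by
        intro z hz h
        have h1 : ‖(κ * v z)‖ < 1 := by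
          rw [norm_mul, hκdef, Complex.norm_conj]
          calc ‖c‖ * ‖(v z)‖ ≤ ‖c‖ * 1 := by
                have := hv_le z hz
                exact mul_le_mul_of_nonneg_left this (norm_nonneg _)
            _ = ‖c‖ := mul_one _
            _ < 1 := habsc
        rw [sub_eq_zero] at h
        rw [← h] at h1; simp at h1
      set w := fun z => (v z - c) * (1 - κ * v z)⁻¹ with hwdef
      have hwd : DifferentiableOn ℂ w (ball 0 1) := by
        apply DifferentiableOn.mul
        · exact hvan.differentiableOn.sub (differentiableOn_const c)
        · exact DifferentiableOn.inv
            ((differentiableOn_const 1).sub (hvan.differentiableOn.const_smul κ)) hden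
      have hw0 : w 0 = 0 := by simp [hwdef, hcdef]
      have hwmaps : Set.MapsTo w (ball (0:ℂ) 1) (ball (0:ℂ) 1) := by
        intro z hz
        have hvz : ‖(v z)‖ < 1 := by
          exact hlt z hz
        have hid : Complex.normSq (1 - κ * v z) - Complex.normSq (v z - c) =
            (1 - Complex.normSq c) * (1 - Complex.normSq (v z)) := by
          simp only [hκdef, Complex.normSq_apply, Complex.sub_re, Complex.sub_im,
            Complex.mul_re, Complex.mul_im, Complex.one_re, Complex.one_im,
            Complex.conj_re, Complex.conj_im]
          ring
        have hpos : 0 < (1 - Complex.normSq c) * (1 - Complex.normSq (v z)) := by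
          apply mul_pos
          · rw [Complex.normSq_eq_norm_sq]; nlinarith [norm_nonneg c]
          · rw [Complex.normSq_eq_norm_sq]; nlinarith [norm_nonneg (v z)]
        have hlt2 : Complex.normSq (v z - c) < Complex.normSq (1 - κ * v z) := by linarith
        have habslt : ‖(v z - c)‖ < ‖(1 - κ * v z)‖ := by
          rw [Complex.norm_def, Complex.norm_def]
          exact Real.sqrt_lt_sqrt (Complex.normSq_nonneg _) hlt2
        rw [mem_ball_zero_iff, hwdef]
        simp only [norm_mul, norm_inv]
        rw [mul_inv_lt_iff₀ (norm_pos_iff.mpr (hden z hz))]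
        · simpa using habslt
      have hvd : HasDerivAt v (deriv v 0) 0 := (hvat0.differentiableAt).hasDerivAt
      have h1 : HasDerivAt (fun z => v z - c) (deriv v 0) 0 := hvd.sub_const c
      have h2 : HasDerivAt (fun z => 1 - κ * v z) (-(κ * deriv v 0)) 0 :=
        (hvd.const_mul κ).const_sub 1
      have h3 := h2.inv (hden 0 hball)
      have h4 := h1.mul h3
      have hw' : HasDerivAt w (deriv v 0 * (1 - κ * c)⁻¹) 0 := by
        refine h4.congr_deriv ?_
        simp [sub_self, hcdef]
      have hκc : κ * c = (Complex.normSq c : ℂ) := by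
        rw [hκdef, Complex.normSq_eq_conj_mul_self]
      have hbnd := Complex.norm_deriv_le_one_of_mapsTo_ball hwd
        (by rw [hw0]; exact hwmaps.mono_right ball_subset_closedBall) one_pos
      rw [hw'.deriv] at hbnd
      rw [hκc] at hbnd
      have hcast : (1 : ℂ) - (Complex.normSq c : ℂ) = ((1 - Complex.normSq c : ℝ) : ℂ) := by
        push_cast; ring
      rw [hcast, norm_mul, norm_inv, Complex.norm_real, Real.norm_eq_abs] at hbnd
      have hpos : 0 < 1 - Complex.normSq c := by
        rw [Complex.normSq_eq_norm_sq]; nlinarith [norm_nonneg c]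
      rw [abs_of_pos hpos] at hbnd
      rw [Complex.normSq_eq_norm_sq] at hbnd hpos
      calc ‖(deriv v 0)‖
          = ‖(deriv v 0)‖ * (1 - ‖c‖ ^ 2)⁻¹ * (1 - ‖c‖ ^ 2) := by
            field_simp
        _ ≤ 1 * (1 - ‖c‖ ^ 2) := by
            apply mul_le_mul_of_nonneg_right hbnd (le_of_lt hpos)
        _ = 1 - ‖c‖ ^ 2 := one_mul _
    · -- maximum modulus: v is constant
      push_neg at hlt
      obtain ⟨z₀, hz₀, hge⟩ := hlt
      have hmax : IsMaxOn (norm ∘ v) (ball (0:ℂ) 1) z₀ := by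
        intro z hz
        simp only [Function.comp_apply]
        exact le_trans (hv_le z hz) hge
      have heq := Complex.eqOn_of_isPreconnected_of_isMaxOn_norm
        (convex_ball (0:ℂ) 1).isPreconnected isOpen_ball hvan.differentiableOn hz₀ hmax
      have hdv : deriv v 0 = 0 := by
        have hev : v =ᶠ[nhds 0] (fun _ => v z₀) := by
          filter_upwards [isOpen_ball.mem_nhds hball] with z hz
          exact heq hz
        rw [hev.deriv_eq]; exact deriv_const _ _
      rw [hdv]
      have : ‖(v 0)‖ ≤ 1 := by
        exact hv_le 0 hball
      simp only [norm_zero]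
      nlinarith [norm_nonneg (v 0)]
  -- assemble
  have hfin : iteratedDeriv 2 u 0 / 2 = deriv v 0 := by rw [hiter, hc2]
  rw [hfin, ← hv0]
  calc ‖(deriv v 0 + v 0 ^ 2)‖
      ≤ ‖(deriv v 0)‖ + ‖(v 0 ^ 2)‖ := norm_add_le _ _
    _ = ‖(deriv v 0)‖ + ‖(v 0)‖ ^ 2 := by rw [norm_pow]
    _ ≤ (1 - ‖(v 0)‖ ^ 2) + ‖(v 0)‖ ^ 2 := by linarith
    _ = 1 := by ring

lemma key_eq (lam al be d : ℝ) (k : ℕ) (hd : 0 ≤ d) (ζ : ℝ)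
    (F : ℂ → ℂ) (aa : ℕ → ℂ)
    (hF : IsInA F aa)
    (hne : ∀ z ∈ unitDisk, z ≠ 0 → Dop lam al be d k aa z ≠ 0)
    (hsub : Subord (bazFun 1 (Dop lam al be d k aa))
      (fun z : ℂ => (1 + (1 - 2 * (ζ : ℂ)) * z) / (1 - z))) :
    ∃ c : ℂ, ‖c‖ ≤ 1 ∧
      (3 : ℂ) * ((Ups lam al be k 3 : ℝ) : ℂ) * ((Cdel d 3 : ℝ) : ℂ) * aa 3
        = 2 * (1 - (ζ:ℂ)) * c := by
  obtain ⟨hFan, ha0, ha1, hsumf⟩ := hF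
  -- step 1 : coefficient growth bound
  have hhalf : (1/2 : ℂ) ∈ unitDisk := by
    rw [unitDisk_eq, mem_ball_zero_iff]
    simp; norm_num
  have hsummable : Summable (fun n => aa n * (1/2 : ℂ)^n) := (hsumf _ hhalf).summable
  have htend : Filter.Tendsto (fun n => ‖aa n * (1/2 : ℂ)^n‖) atTop (nhds 0) := by
    simpa using hsummable.tendsto_atTop_zero.norm
  obtain ⟨M, hMb⟩ := htend.bddAbove_range
  have hM0 : 0 ≤ M := le_trans (norm_nonneg _) (hMb (Set.mem_range_self 0))
  have hMa : ∀ n : ℕ, ‖(aa n)‖ ≤ M * 2^n := by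
    intro n
    have h1 : ‖aa n * (1/2 : ℂ)^n‖ ≤ M := hMb (Set.mem_range_self n)
    rw [norm_mul, norm_pow] at h1
    have h2 : ‖(1/2 : ℂ)‖ = 1/2 := by simp
    rw [h2] at h1
    have h3 : (0:ℝ) < (1/2)^n := by positivity
    calc ‖(aa n)‖ = ‖(aa n)‖ * (1/2)^n * 2^n := by
          rw [mul_assoc]; rw [show ((1:ℝ)/2)^n * 2^n = 1 by
            rw [← mul_pow]; norm_num]; ring
      _ ≤ M * 2^n := by
          apply mul_le_mul_of_nonneg_right h1 (by positivity)
  -- step 2 : the power series of Dop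
  set L : ℝ := |lam * (al + be - 1)| with hLdef
  have hL0 : 0 ≤ L := abs_nonneg _
  set R : ℝ := (2:ℝ)^k * (1 + d) * 2 * (L^k + 1) with hRdef
  set C : ℝ := (M + 1) * (L^k + 1) with hCdef
  have hLk0 : (0:ℝ) ≤ L^k := by positivity
  have h2k : (1:ℝ) ≤ (2:ℝ)^k := one_le_pow₀ (by norm_num)
  have he1 : (1:ℝ) ≤ (2:ℝ)^k * (1+d) := by nlinarith
  have he2 : (2:ℝ) ≤ (2:ℝ)^k * (1+d) * 2 := by nlinarith
  have hR1 : 1 ≤ R := by rw [hRdef]; nlinarith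
  have hR0 : 0 < R := by linarith
  have hC1 : 1 ≤ C := by rw [hCdef]; nlinarith
  set A : ℕ → ℂ := fun n => if n = 1 then 1 else if 2 ≤ n then
      ((Ups lam al be k n : ℝ) : ℂ) * ((Cdel d n : ℝ) : ℂ) * aa n else 0 with hAdef
  have hAbound : ∀ n, ‖A n‖ ≤ C * R^n := by
    intro n
    match n with
    | 0 => simp [hAdef]; positivity
    | 1 =>
      simp only [hAdef, if_pos rfl]
      rw [norm_one, pow_one]
      nlinarith
    | (m+2) =>
      have hAm : A (m+2) = ((Ups lam al be k (m+2) : ℝ) : ℂ) *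
          ((Cdel d (m+2) : ℝ) : ℂ) * aa (m+2) := by
        simp only [hAdef]
        rw [if_neg (by omega), if_pos (by omega)]
      rw [hAm]
      have e0 : ‖((Ups lam al be k (m+2) : ℝ) : ℂ) * ((Cdel d (m+2) : ℝ) : ℂ) * aa (m+2)‖
          = |Ups lam al be k (m+2)| * |Cdel d (m+2)| * ‖(aa (m+2))‖ := by
        rw [norm_mul, norm_mul, Complex.norm_real, Complex.norm_real]
        simp [Real.norm_eq_abs]
      rw [e0]
      -- bound each factor
      have e1 : |Ups lam al be k (m+2)| ≤ L^k * ((2:ℝ)^k)^(m+2) := by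
        simp only [Ups]
        rw [_root_.abs_pow, _root_.abs_mul]
        have : |((m+2 : ℕ) : ℝ) - 1| = (m:ℝ) + 1 := by
          have e9 : ((m+2 : ℕ) : ℝ) - 1 = (m:ℝ) + 1 := by push_cast; ring
          rw [e9, _root_.abs_of_nonneg (by positivity : (0:ℝ) ≤ (m:ℝ) + 1)]
        rw [this, ← hLdef]
        rw [mul_pow]
        apply mul_le_mul_of_nonneg_left _ hLk0
        have h5 : (m:ℝ) + 1 ≤ 2^(m+2) := by
          have := Nat.lt_two_pow_self (n := m+1)
          have h6 : ((m+1 : ℕ):ℝ) ≤ ((2^(m+1) : ℕ) : ℝ) := by exact_mod_cast this.le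
          push_cast at h6
          calc (m:ℝ) + 1 ≤ 2^(m+1) := by linarith
            _ ≤ 2^(m+2) := by
                apply pow_le_pow_right₀ (by norm_num) (by omega)
        calc ((m:ℝ)+1)^k ≤ ((2:ℝ)^(m+2))^k := by
              apply pow_le_pow_left₀ (by positivity) h5
          _ = ((2:ℝ)^k)^(m+2) := by rw [← pow_mul, ← pow_mul, Nat.mul_comm]
      have e2 : |Cdel d (m+2)| ≤ (1+d)^(m+2) := by
        rw [_root_.abs_of_pos (Cdel_pos hd (by omega))]
        exact Cdel_le hd (m+2) (by omega)
      have e3 : ‖(aa (m+2))‖ ≤ M * 2^(m+2) := hMa (m+2)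
      calc |Ups lam al be k (m+2)| * |Cdel d (m+2)| * ‖(aa (m+2))‖
          ≤ (L^k * ((2:ℝ)^k)^(m+2)) * ((1+d)^(m+2)) * (M * 2^(m+2)) := by
            apply mul_le_mul
            apply mul_le_mul e1 e2 (abs_nonneg _) (by positivity)
            exact e3
            exact norm_nonneg _
            positivity
        _ = (L^k * M) * (((2:ℝ)^k)^(m+2) * (1+d)^(m+2) * 2^(m+2)) := by ring
        _ ≤ (C * (L^k+1)^(m+2)) * (((2:ℝ)^k)^(m+2) * (1+d)^(m+2) * 2^(m+2)) := by
            apply mul_le_mul_of_nonneg_right _ (by positivity)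
            have h7 : (1:ℝ) ≤ (L^k+1)^(m+2) := one_le_pow₀ (by linarith)
            nlinarith
        _ = C * R^(m+2) := by
            rw [hRdef]
            rw [mul_pow, mul_pow, mul_pow]
            ring
  set p := FormalMultilinearSeries.ofScalars ℂ A with hpdef
  have hRinv : (0:ℝ) ≤ R⁻¹ := by positivity
  set r : NNReal := Real.toNNReal R⁻¹ with hrdef
  have hrad : (r : ℝ≥0∞) ≤ p.radius := by
    apply p.le_radius_of_bound C
    intro n
    have h1 : ‖p n‖ = ‖A n‖ := FormalMultilinearSeries.ofScalars_norm ℂ A n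
    rw [h1]
    have h2 : ((r : NNReal) : ℝ) = R⁻¹ := Real.coe_toNNReal _ hRinv
    rw [h2]
    calc ‖A n‖ * (R⁻¹)^n ≤ (C * R^n) * (R⁻¹)^n := by
          apply mul_le_mul_of_nonneg_right (hAbound n) (by positivity)
      _ = C := by
          rw [mul_assoc, ← mul_pow]
          rw [mul_inv_cancel₀ (ne_of_gt hR0)]
          simp
  have hradpos : 0 < p.radius := by
    apply lt_of_lt_of_le _ hrad
    have : (0:ℝ≥0) < r := by
      rw [hrdef]
      exact Real.toNNReal_pos.mpr (by positivity)
    exact_mod_cast this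
  have hball := p.hasFPowerSeriesOnBall hradpos
  have hDeq : ∀ z ∈ EMetric.ball (0:ℂ) p.radius, Dop lam al be d k aa z = p.sum z := by
    intro z hz
    have hsum1 : HasSum (fun n => A n * z^n) (p.sum z) := by
      have h1 := p.hasSum hz
      have h2 : (fun n : ℕ => p n fun _ => z) = fun n => A n * z^n := by
        funext n
        rw [hpdef, FormalMultilinearSeries.ofScalars_apply_eq, smul_eq_mul]
      rwa [h2] at h1
    have hsum2 : HasSum (fun n : ℕ => if n = 1 then z else 0) z := hasSum_ite_eq 1 z
    have hsum3 := hsum1.sub hsum2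
    have hfun : (fun n => A n * z^n - if n = 1 then z else 0) =
        (fun n : ℕ => if 2 ≤ n then ((Ups lam al be k n : ℝ) : ℂ) * ((Cdel d n : ℝ) : ℂ)
          * aa n * z^n else 0) := by
      funext n
      match n with
      | 0 => simp [hAdef, ha0]
      | 1 => simp [hAdef]
      | (m+2) =>
        simp only [hAdef]
        rw [if_neg (by omega : ¬(m+2 = 1)), if_pos (by omega : 2 ≤ m+2),
          if_neg (by omega : ¬(m+2 = 1)), if_pos (by omega : 2 ≤ m+2)]
        ring
    rw [hfun] at hsum3
    rw [Dop]
    rw [hsum3.tsum_eq]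
    push_cast
    ring
  have hmem0 : EMetric.ball (0:ℂ) p.radius ∈ nhds (0:ℂ) :=
    EMetric.isOpen_ball.mem_nhds (EMetric.mem_ball_self hradpos)
  have hDF : HasFPowerSeriesAt (Dop lam al be d k aa) p 0 := by
    apply hball.hasFPowerSeriesAt.congr
    filter_upwards [hmem0] with z hz
    exact (hDeq z hz).symm
  have hcoeff : ∀ n, p.coeff n = A n := by
    intro n
    have h1 : p.coeff n = (FormalMultilinearSeries.ofScalars ℂ A n) (fun _ => (1:ℂ)) := rfl
    rw [h1, FormalMultilinearSeries.ofScalars_apply_eq]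
    simp
  -- step 3 : unpack the subordination
  obtain ⟨u, huan, hu0, hub, hueq⟩ := hsub
  rw [unitDisk_eq] at huan hub hueq hne
  have hball0 : (0:ℂ) ∈ ball (0:ℂ) 1 := mem_ball_self one_pos
  set B : ℂ := 2 * (1 - (ζ:ℂ)) with hBdef
  set G : ℂ → ℂ := fun z => B * (1 - u z)⁻¹ - (1 - 2*(ζ:ℂ)) with hGdef
  have hu1 : ∀ z ∈ ball (0:ℂ) 1, (1:ℂ) - u z ≠ 0 := by
    intro z hz h
    rw [sub_eq_zero] at h
    have h2 := hub z hz
    rw [← h] at h2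
    simp at h2
  have hEq : ∀ z ∈ ball (0:ℂ) 1, deriv (Dop lam al be d k aa) z = G z := by
    intro z hz
    rcases eq_or_ne z 0 with rfl | hz0
    · have h1 : deriv (Dop lam al be d k aa) 0 = p.coeff 1 := hDF.deriv
      rw [h1, hcoeff 1]
      simp only [hAdef, if_pos rfl, hGdef, hu0]
      rw [hBdef]
      norm_num
      ring
    · have h1 := hueq z hz
      rw [bazFun, if_neg hz0] at h1
      have hFz := hne z hz hz0
      rw [Complex.ofReal_one, Complex.cpow_one] at h1
      have h2 : z * deriv (Dop lam al be d k aa) z / Dop lam al be d k aa z *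
          (Dop lam al be d k aa z / z) = deriv (Dop lam al be d k aa) z := by
        field_simp
      rw [h2] at h1
      rw [h1, hGdef]
      have h3 := hu1 z hz
      field_simp
      ring
  have hGev : deriv (Dop lam al be d k aa) =ᶠ[nhds 0] G := by
    filter_upwards [isOpen_ball.mem_nhds hball0] with z hz
    exact hEq z hz
  -- step 4 : derivative computations
  set H : ℂ → ℂ := fun z => B * (deriv u z * ((1 - u z)^2)⁻¹) with hHdef
  have hderivG : ∀ z ∈ ball (0:ℂ) 1, HasDerivAt G (H z) z := by
    intro z hz
    have hud : HasDerivAt u (deriv u z) z := (huan z hz).differentiableAt.hasDerivAt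
    have h1 : HasDerivAt (fun w => 1 - u w) (-(deriv u z)) z := hud.const_sub 1
    have h2 := h1.inv (hu1 z hz)
    have h3 := (h2.const_mul B).sub_const (1 - 2*(ζ:ℂ))
    refine h3.congr_deriv ?_
    rw [hHdef]
    simp only [neg_neg]
    rw [div_eq_mul_inv]
  have hGH : deriv G =ᶠ[nhds 0] H := by
    filter_upwards [isOpen_ball.mem_nhds hball0] with z hz
    exact (hderivG z hz).deriv
  have hDH : deriv (deriv (deriv (Dop lam al be d k aa))) 0 = deriv H 0 :=
    (hGev.deriv.trans hGH).deriv_eq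
  -- compute deriv H 0
  have hu'an : AnalyticOnNhd ℂ (deriv u) (ball 0 1) := huan.deriv
  have hud0 : HasDerivAt (deriv u) (deriv (deriv u) 0) 0 :=
    (hu'an 0 hball0).differentiableAt.hasDerivAt
  have hu00 : HasDerivAt u (deriv u 0) 0 := (huan 0 hball0).differentiableAt.hasDerivAt
  have h1 : HasDerivAt (fun w => 1 - u w) (-(deriv u 0)) 0 := hu00.const_sub 1
  have h2 : HasDerivAt (fun w => (1 - u w)^2) ((2:ℕ) * (1 - u 0)^1 * (-(deriv u 0))) 0 :=
    h1.pow 2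
  have h3 : ((1:ℂ) - u 0)^2 ≠ 0 := by rw [hu0]; norm_num
  have h4 := h2.inv h3
  have h5 := hud0.mul h4
  have h6 := h5.const_mul B
  have hH0 : deriv H 0 = B * (deriv (deriv u) 0 + 2 * (deriv u 0)^2) := by
    rw [hHdef]
    rw [show (fun z => B * (deriv u z * ((1 - u z) ^ 2)⁻¹)) =
      (fun y => B * ((deriv u * (fun w => (1 - u w) ^ 2)⁻¹ : ℂ → ℂ)) y) from rfl, h6.deriv]
    simp only [Pi.inv_apply]
    rw [hu0]
    simp only [sub_zero, one_pow, pow_one, inv_one, mul_one, one_mul]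
    push_cast
    ring
  -- step 5 : combine
  have hiter3 : iteratedDeriv 3 (Dop lam al be d k aa) 0 = 6 * p.coeff 3 := by
    have := iteratedDeriv_eq_coeff hDF 3
    rw [this]; norm_num [Nat.factorial]
  have hiter3' : iteratedDeriv 3 (Dop lam al be d k aa) 0 =
      deriv (deriv (deriv (Dop lam al be d k aa))) 0 := by
    rw [iteratedDeriv_succ, iteratedDeriv_succ, iteratedDeriv_one]
  have hA3 : p.coeff 3 = ((Ups lam al be k 3 : ℝ) : ℂ) * ((Cdel d 3 : ℝ) : ℂ) * aa 3 := by
    rw [hcoeff 3]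
    simp only [hAdef]
    norm_num
  refine ⟨iteratedDeriv 2 u 0 / 2 + (deriv u 0)^2, schwarz_coeff_two huan hu0 hub, ?_⟩
  have hu2 : iteratedDeriv 2 u 0 = deriv (deriv u) 0 := by
    rw [iteratedDeriv_succ, iteratedDeriv_one]
  rw [hu2]
  have hfinal : 6 * (((Ups lam al be k 3 : ℝ) : ℂ) * ((Cdel d 3 : ℝ) : ℂ) * aa 3)
      = B * (deriv (deriv u) 0 + 2 * (deriv u 0)^2) := by
    rw [← hA3, ← hiter3, hiter3', hDH, hH0]
  rw [hBdef] at hfinal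
  linear_combination hfinal / 2
end key

theorem cor_3_12 (k : ℕ) (α β lam δ : ℝ)
    (hα0 : 0 < α) (hα1 : α ≤ 1) (hβ0 : 0 < β) (hβ1 : β ≤ 1)
    (hlam : 0 ≤ lam) (hδ : 0 ≤ δ)
    (ζ : ℝ) (hζ0 : 0 ≤ ζ) (hζ1 : ζ < 1)
    (f g : ℂ → ℂ) (a b : ℕ → ℂ)
    (hmem : MemB lam α β δ k 1 (fun z : ℂ => (1 + (1 - 2 * (ζ : ℂ)) * z) / (1 - z)) f g a b)
    (hΥ2 : 0 < Ups lam α β k 2) (hΥ3 : 0 < Ups lam α β k 3) :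
    ‖a 2‖ ≤ Real.sqrt (2 * (1 - ζ) / (3 * Ups lam α β k 3 * Cdel δ 3)) ∧
    ‖a 3‖ ≤ 2 * (1 - ζ) / (3 * Ups lam α β k 3 * Cdel δ 3) + ((1 - ζ) / (Ups lam α β k 2 * Cdel δ 2)) ^ 2 := by
  obtain ⟨hfA, _, hgA, _, _, hb2, hb3, hnea, hneb, hsuba, hsubb⟩ := hmem
  obtain ⟨c, hc, heqc⟩ := key_eq lam α β δ k hδ ζ f a hfA hnea hsuba
  obtain ⟨e, he, heqe⟩ := key_eq lam α β δ k hδ ζ g b hgA hneb hsubb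
  rw [hb3] at heqe
  have hC3 : 0 < Cdel δ 3 := Cdel_pos hδ (by omega)
  have hTpos : (0:ℝ) < 3 * Ups lam α β k 3 * Cdel δ 3 :=
    mul_pos (mul_pos (by norm_num) hΥ3) hC3
  have hBpos : (0:ℝ) < 2 * (1 - ζ) := by linarith
  have hrhs : ∀ x : ℂ, ‖(2 * (1 - (ζ:ℂ)) * x)‖ = 2 * (1-ζ) * ‖x‖ := by
    intro x
    rw [norm_mul, norm_mul]
    have h1 : (1:ℂ) - (ζ:ℂ) = ((1 - ζ : ℝ):ℂ) := by push_cast; ring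
    rw [h1, Complex.norm_real, Real.norm_eq_abs, _root_.abs_of_pos (by linarith : (0:ℝ) < 1 - ζ)]
    norm_num
  have habs3 : ‖((3:ℂ) * ((Ups lam α β k 3 : ℝ):ℂ) * ((Cdel δ 3 : ℝ):ℂ) * a 3)‖
      = (3 * Ups lam α β k 3 * Cdel δ 3) * ‖(a 3)‖ := by
    rw [norm_mul, norm_mul, norm_mul, Complex.norm_real, Complex.norm_real, Real.norm_eq_abs, Real.norm_eq_abs,
      _root_.abs_of_pos hΥ3, _root_.abs_of_pos hC3]
    norm_num
  have h3bound : ‖(a 3)‖ ≤ 2 * (1-ζ) / (3 * Ups lam α β k 3 * Cdel δ 3) := by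
    have h1 : (3 * Ups lam α β k 3 * Cdel δ 3) * ‖(a 3)‖ ≤ 2 * (1-ζ) := by
      rw [← habs3, heqc, hrhs]
      calc 2*(1-ζ) * ‖c‖ ≤ 2*(1-ζ) * 1 :=
            mul_le_mul_of_nonneg_left hc (le_of_lt hBpos)
        _ = 2*(1-ζ) := mul_one _
    rw [le_div_iff₀ hTpos, mul_comm]
    exact h1
  have heq2 : (6:ℂ) * ((Ups lam α β k 3 : ℝ):ℂ) * ((Cdel δ 3 : ℝ):ℂ) * (a 2)^2
      = 2 * (1 - (ζ:ℂ)) * (c + e) := by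
    linear_combination heqc + heqe
  have habs2 : ‖((6:ℂ) * ((Ups lam α β k 3 : ℝ):ℂ) * ((Cdel δ 3 : ℝ):ℂ) * (a 2)^2)‖
      = 2 * ((3 * Ups lam α β k 3 * Cdel δ 3) * ‖(a 2)‖^2) := by
    rw [norm_mul, norm_mul, norm_mul, norm_pow, Complex.norm_real, Complex.norm_real, Real.norm_eq_abs, Real.norm_eq_abs,
      _root_.abs_of_pos hΥ3, _root_.abs_of_pos hC3]
    norm_num
    ring
  have h2bound : (3 * Ups lam α β k 3 * Cdel δ 3) * ‖(a 2)‖^2 ≤ 2 * (1-ζ) := by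
    have h1 : 2 * ((3 * Ups lam α β k 3 * Cdel δ 3) * ‖(a 2)‖^2)
        ≤ 2 * (1-ζ) * 2 := by
      rw [← habs2, heq2, hrhs]
      have h2 : ‖(c + e)‖ ≤ 2 := by
        calc ‖(c + e)‖ ≤ ‖c‖ + ‖e‖ := norm_add_le _ _
          _ ≤ 1 + 1 := add_le_add hc he
          _ = 2 := by norm_num
      exact mul_le_mul_of_nonneg_left h2 (le_of_lt hBpos)
    linarith
  constructor
  · have h1 : ‖(a 2)‖ = Real.sqrt (‖(a 2)‖^2) :=
      (Real.sqrt_sq (norm_nonneg _)).symm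
    rw [h1]
    apply Real.sqrt_le_sqrt
    rw [le_div_iff₀ hTpos, mul_comm]
    exact h2bound
  · have hsq : (0:ℝ) ≤ ((1-ζ)/(Ups lam α β k 2 * Cdel δ 2))^2 := sq_nonneg _
    linarith
end
end

section
/- (Corollary 3.17) Suppose k = 0 and δ = 0 (so Υₙ = 1 and C(δ,n) = 1 for all n, and Df = f, Dg = g). Let 0 ≤ ζ < 1 and let f(z) = z + Σ_{n≥2} aₙ zⁿ belong to the class B_Σ(0, ζ). Then |a₂| ≤ √(2(1−ζ)) and |a₃| ≤ (1−ζ) + 4(1−ζ)². -/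
open Complex

noncomputable section

section AuxLemmas

open Metric

lemma myDop_eq (lam al be : ℝ) (a : ℕ → ℂ) (h0 : a 0 = 0) (h1 : a 1 = 1) {z S : ℂ}
    (hS : HasSum (fun n => a n * z ^ n) S) : Dop lam al be 0 0 a z = S := by
  have hcdel : ∀ n : ℕ, 2 ≤ n → Cdel 0 n = 1 := by
    intro n hn
    have hpos : (0:ℝ) < (n:ℝ) := by exact_mod_cast Nat.pos_of_ne_zero (by omega)
    have hΓ : Real.Gamma (n : ℝ) ≠ 0 := (Real.Gamma_pos_of_pos hpos).ne'
    simp [Cdel, Real.Gamma_one, hΓ]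
  have hfun : (fun n : ℕ => if 2 ≤ n then (Ups lam al be 0 n : ℂ) * (Cdel 0 n : ℂ) * a n * z ^ n else 0)
      = fun n : ℕ => if 2 ≤ n then a n * z ^ n else 0 := by
    funext n
    split_ifs with h
    · rw [hcdel n h, Ups, pow_zero]; push_cast; ring
    · rfl
  have hg : HasSum (fun n : ℕ => if 2 ≤ n then (0:ℂ) else a n * z ^ n) z := by
    have : HasSum (fun n : ℕ => if 2 ≤ n then (0:ℂ) else a n * z ^ n)
        (∑ n ∈ ({0,1} : Finset ℕ), if 2 ≤ n then (0:ℂ) else a n * z ^ n) := by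
      apply hasSum_sum_of_ne_finset_zero
      intro n hn
      have : 2 ≤ n := by simp at hn; omega
      simp [this]
    simpa [h0, h1] using this
  have hmain : HasSum (fun n : ℕ => if 2 ≤ n then a n * z ^ n else 0) (S - z) := by
    have := hS.sub hg
    convert this using 1
    · rfl
    funext n
    split_ifs with h <;> simp
  rw [Dop, hfun, hmain.tsum_eq]
  ring

lemma myF_zero (f : ℂ → ℂ) (a : ℕ → ℂ) (hfa : IsInA f a) : f 0 = 0 := by
  obtain ⟨-, h0, -, hsum⟩ := hfa
  have h : HasSum (fun n : ℕ => a n * (0:ℂ) ^ n) (f 0) := hsum 0 (by simp [unitDisk])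
  have h' : HasSum (fun n : ℕ => a n * (0:ℂ) ^ n) (a 0 * (0:ℂ) ^ 0) := by
    apply hasSum_single (0 : ℕ)
    intro n hn
    simp [zero_pow hn]
  rw [h.unique h', h0, zero_mul]

lemma myHasFPS (f : ℂ → ℂ) (a : ℕ → ℂ) (hfa : IsInA f a) :
    HasFPowerSeriesOnBall f (FormalMultilinearSeries.ofScalars ℂ a) 0 1 := by
  obtain ⟨han, h0, h1, hsum⟩ := hfa
  constructor
  · apply ENNReal.le_of_forall_nnreal_lt
    intro ρ hρ
    have hρ1 : (ρ : ℝ) < 1 := by exact_mod_cast hρ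
    apply FormalMultilinearSeries.le_radius_of_tendsto (l := 0)
    have hmem : ((ρ:ℝ) : ℂ) ∈ unitDisk := by
      simp [unitDisk, _root_.abs_of_nonneg ρ.coe_nonneg, hρ1]
    have := ((hsum _ hmem).summable.tendsto_atTop_zero).norm
    simp only [norm_zero] at this
    convert this using 2 with n
    rw [FormalMultilinearSeries.ofScalars_norm, norm_mul, norm_pow]
    norm_num [_root_.abs_of_nonneg ρ.coe_nonneg]
  · exact one_pos
  · intro y hy
    have hy' : y ∈ unitDisk := by
      simpa [unitDisk, mem_ball_zero_iff, ← ofReal_norm] using hy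
    have := hsum y hy'
    simp only [zero_add]
    convert this using 2 with n
    · rfl
    rw [FormalMultilinearSeries.ofScalars_apply_eq, smul_eq_mul]

end AuxLemmas
section AuxLemmas2

open Metric

lemma myCoeffDeriv {f : ℂ → ℂ} {p : FormalMultilinearSeries ℂ ℂ ℂ} {r : ENNReal}
    (h : HasFPowerSeriesOnBall f p 0 r) (n : ℕ) :
    iteratedDeriv n f 0 = (n.factorial : ℂ) * p.coeff n := by
  have := h.factorial_smul (1:ℂ) n
  rw [iteratedDeriv_eq_iteratedFDeriv, ← this, FormalMultilinearSeries.coeff]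
  simp [nsmul_eq_mul]

lemma myIterA (f : ℂ → ℂ) (a : ℕ → ℂ) (hfa : IsInA f a) (n : ℕ) :
    iteratedDeriv n f 0 = (n.factorial : ℂ) * a n := by
  rw [myCoeffDeriv (myHasFPS f a hfa) n]
  congr 1
  show (FormalMultilinearSeries.ofScalars ℂ a n) (fun _ => (1:ℂ)) = a n
  simpa using FormalMultilinearSeries.ofScalars_apply_eq (c := a) (1:ℂ) n

end AuxLemmas2
section AuxLemmas3

open Metric Real intervalIntegral

lemma myCauchyCoeff (H : ℂ → ℂ) {r : ℝ} (hr0 : 0 < r) (m : ℕ) :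
    (cauchyPowerSeries H 0 r).coeff m
      = ((2 * Real.pi : ℝ) : ℂ)⁻¹ *
        ∫ θ in (0:ℝ)..2 * Real.pi, (circleMap 0 r θ)⁻¹ ^ m * H (circleMap 0 r θ) := by
  have hco : (cauchyPowerSeries H 0 r).coeff m
      = (2 * ↑Real.pi * I)⁻¹ • ∮ z in C(0, r), (1 / (z - 0)) ^ m • (z - 0)⁻¹ • H z :=
    cauchyPowerSeries_apply H 0 r m 1
  rw [hco, circleIntegral]
  have hint : ∀ θ : ℝ, deriv (circleMap 0 r) θ •
        ((1 / (circleMap 0 r θ - 0)) ^ m • (circleMap 0 r θ - 0)⁻¹ • H (circleMap 0 r θ))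
      = I * ((circleMap 0 r θ)⁻¹ ^ m * H (circleMap 0 r θ)) := by
    intro θ
    have hz : circleMap 0 r θ ≠ 0 := circleMap_ne_center hr0.ne'
    rw [deriv_circleMap]
    simp only [smul_eq_mul, sub_zero, one_div]
    field_simp
  simp only [hint]
  rw [intervalIntegral.integral_const_mul]
  have hpi : ((Real.pi : ℝ) : ℂ) ≠ 0 := by
    exact_mod_cast Complex.ofReal_ne_zero.mpr Real.pi_ne_zero
  rw [smul_eq_mul]
  push_cast
  field_simp

lemma myZeroInt (H : ℂ → ℂ) {r : ℝ} (hr0 : 0 < r) (hr1 : r < 1)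
    (hd : DifferentiableOn ℂ H (ball (0:ℂ) 1)) (n : ℕ) (hn : 1 ≤ n) :
    (∫ θ in (0:ℝ)..2 * Real.pi, (circleMap 0 r θ) ^ n * H (circleMap 0 r θ)) = 0 := by
  have hz : ∀ θ : ℝ, circleMap 0 r θ ≠ 0 := fun θ => circleMap_ne_center hr0.ne'
  have h0 : (∮ z in C(0, r), z ^ (n - 1) * H z) = 0 := by
    apply Complex.circleIntegral_eq_zero_of_differentiable_on_off_countable hr0.le
      Set.countable_empty
    · apply ContinuousOn.mul (continuousOn_pow _)
      exact hd.continuousOn.mono (fun z hz => lt_of_le_of_lt (mem_closedBall_zero_iff.mp hz)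
        hr1 |> mem_ball_zero_iff.mpr)
    · intro z hzm
      have hz1 : z ∈ ball (0:ℂ) 1 := ball_subset_ball hr1.le hzm.1
      exact (differentiableAt_pow _).mul (hd.differentiableAt (isOpen_ball.mem_nhds hz1))
  rw [circleIntegral] at h0
  have hint : ∀ θ : ℝ, deriv (circleMap 0 r) θ •
        ((circleMap 0 r θ) ^ (n - 1) * H (circleMap 0 r θ))
      = I * ((circleMap 0 r θ) ^ n * H (circleMap 0 r θ)) := by
    intro θ
    rw [deriv_circleMap]
    have : circleMap 0 r θ * circleMap 0 r θ ^ (n - 1) = circleMap 0 r θ ^ n := by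
      rw [← pow_succ']
      congr 1
      omega
    simp only [smul_eq_mul]
    rw [mul_comm (circleMap 0 r θ) I, mul_assoc, ← mul_assoc (circleMap 0 r θ), this]
  simp only [hint] at h0
  rw [intervalIntegral.integral_const_mul] at h0
  simpa [Complex.I_ne_zero] using h0

lemma myConjInt (H : ℂ → ℂ) {r : ℝ} (hr0 : 0 < r) (hr1 : r < 1)
    (hd : DifferentiableOn ℂ H (ball (0:ℂ) 1)) (n : ℕ) (hn : 1 ≤ n) :
    (∫ θ in (0:ℝ)..2 * Real.pi,
      (circleMap 0 r θ)⁻¹ ^ n * (starRingEnd ℂ) (H (circleMap 0 r θ))) = 0 := by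
  have hz : ∀ θ : ℝ, circleMap 0 r θ ≠ 0 := fun θ => circleMap_ne_center hr0.ne'
  have hHc : Continuous fun θ : ℝ => H (circleMap 0 r θ) := by
    apply hd.continuousOn.comp_continuous (continuous_circleMap 0 r)
    intro θ
    simp [mem_ball_zero_iff, norm_circleMap_zero, abs_of_pos hr0, hr1]
  have hintg : IntervalIntegrable (fun θ : ℝ => (circleMap 0 r θ) ^ n * H (circleMap 0 r θ))
      MeasureTheory.volume 0 (2 * Real.pi) :=
    (((continuous_circleMap 0 r).pow n).mul hHc).intervalIntegrable _ _
  have h0 := myZeroInt H hr0 hr1 hd n hn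
  have hconj : (∫ θ in (0:ℝ)..2 * Real.pi,
      (starRingEnd ℂ) ((circleMap 0 r θ) ^ n * H (circleMap 0 r θ))) = 0 := by
    have h := ContinuousLinearMap.intervalIntegral_comp_comm
      (Complex.conjCLE.toContinuousLinearMap) hintg
    simpa [h0, Complex.conjCLE_apply] using h
  have hc : ∀ θ : ℝ, (starRingEnd ℂ) (circleMap 0 r θ) = (r:ℂ)^2 * (circleMap 0 r θ)⁻¹ := by
    intro θ
    have h1 : circleMap 0 r θ * (starRingEnd ℂ) (circleMap 0 r θ) = ((r:ℝ)^2 : ℂ) := by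
      rw [Complex.mul_conj]
      norm_cast
      rw [Complex.normSq_eq_norm_sq, norm_circleMap_zero, abs_of_pos hr0]
    rw [← h1, mul_comm (circleMap 0 r θ), mul_assoc, mul_inv_cancel₀ (hz θ), mul_one]
  have heq : ∀ θ : ℝ, (starRingEnd ℂ) ((circleMap 0 r θ)^n * H (circleMap 0 r θ))
      = (r:ℂ)^(2*n) * ((circleMap 0 r θ)⁻¹^n * (starRingEnd ℂ) (H (circleMap 0 r θ))) := by
    intro θ
    rw [map_mul, map_pow, hc θ, mul_pow, ← pow_mul]
    ring
  simp only [heq] at hconj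
  rw [intervalIntegral.integral_const_mul] at hconj
  rcases mul_eq_zero.mp hconj with h | h
  · exact absurd h (pow_ne_zero _ (by exact_mod_cast hr0.ne'))
  · exact h

end AuxLemmas3
section AuxLemmas4

open Metric Real intervalIntegral

lemma myExpInt {r : ℝ} (hr0 : 0 < r) (n : ℕ) (hn : 1 ≤ n) :
    (∫ θ in (0:ℝ)..2 * Real.pi, (circleMap 0 r θ)⁻¹ ^ n) = 0 := by
  have heq : ∀ θ : ℝ, (circleMap 0 r θ)⁻¹ ^ n
      = ((r:ℂ)⁻¹) ^ n * Complex.exp ((-(n:ℂ) * I) * (θ:ℝ)) := by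
    intro θ
    have : circleMap 0 r θ = (r:ℂ) * Complex.exp (θ * I) := by
      simp [circleMap]
    rw [this, mul_inv, ← Complex.exp_neg, mul_pow, ← Complex.exp_nat_mul]
    congr 2
    push_cast
    ring
  simp only [heq]
  rw [intervalIntegral.integral_const_mul]
  have hc : (-(n:ℂ) * I) ≠ 0 := by
    simp [Complex.I_ne_zero, Nat.cast_eq_zero]
    omega
  rw [integral_exp_mul_complex hc]
  have h2 : (-(n:ℂ) * I * ((2 * Real.pi : ℝ) : ℂ)) = ((-(n:ℤ) : ℤ) : ℂ) * (2 * ↑Real.pi * I) := by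
    push_cast
    ring
  have h3 : Complex.exp (-(n:ℂ) * I * ((2 * Real.pi : ℝ) : ℂ)) = 1 := by
    rw [h2, Complex.exp_int_mul_two_pi_mul_I]
  push_cast at h3 ⊢
  rw [h3]
  simp

lemma myMean (H : ℂ → ℂ) {r : ℝ} (hr0 : 0 < r) (hr1 : r < 1)
    (hd : DifferentiableOn ℂ H (ball (0:ℂ) 1)) (hH0 : H 0 = 1) :
    (∫ θ in (0:ℝ)..2 * Real.pi, H (circleMap 0 r θ)) = ((2 * Real.pi : ℝ) : ℂ) := by
  set R : NNReal := ⟨r, hr0.le⟩ with hR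
  have hRr : (R : ℝ) = r := rfl
  have hd' : DifferentiableOn ℂ H (closedBall (0:ℂ) (R:ℝ)) :=
    hd.mono (closedBall_subset_ball (by rw [hRr]; exact hr1))
  have hRpos : (0 : NNReal) < R := by
    rw [← NNReal.coe_pos, hRr]
    exact hr0
  have hps := DifferentiableOn.hasFPowerSeriesOnBall hd' hRpos
  have hc0 : (cauchyPowerSeries H 0 (R:ℝ)).coeff 0 = 1 := by
    have h := myCoeffDeriv hps 0
    simp only [iteratedDeriv_zero, Nat.factorial_zero, Nat.cast_one, one_mul] at h
    rw [← h, hH0]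
  rw [hRr, myCauchyCoeff H hr0 0] at hc0
  simp only [pow_zero, one_mul] at hc0
  have hpi : ((2 * Real.pi : ℝ) : ℂ) ≠ 0 := by
    exact_mod_cast Complex.ofReal_ne_zero.mpr (by positivity)
  field_simp at hc0
  push_cast at hc0 ⊢
  exact hc0

end AuxLemmas4
section AuxLemmas5

open Metric Real intervalIntegral

lemma myCarathR (H : ℂ → ℂ) (hd : DifferentiableOn ℂ H (ball (0:ℂ) 1)) (hH0 : H 0 = 1)
    (ζ : ℝ) (hRe : ∀ z ∈ ball (0:ℂ) 1, ζ ≤ (H z).re) (n : ℕ) (hn : 1 ≤ n)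
    {r : ℝ} (hr0 : 0 < r) (hr1 : r < 1) :
    ‖iteratedDeriv n H 0‖ ≤ (n.factorial : ℝ) * (2 * (1 - ζ)) / r ^ n := by
  have hz : ∀ θ : ℝ, circleMap 0 r θ ≠ 0 := fun θ => circleMap_ne_center hr0.ne'
  have hmem : ∀ θ : ℝ, circleMap 0 r θ ∈ ball (0:ℂ) 1 := by
    intro θ
    rw [mem_ball_zero_iff, norm_circleMap_zero, abs_of_pos hr0]
    exact hr1
  have hHc : Continuous fun θ : ℝ => H (circleMap 0 r θ) :=
    hd.continuousOn.comp_continuous (continuous_circleMap 0 r) hmem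
  have hInv : Continuous fun θ : ℝ => (circleMap 0 r θ)⁻¹ ^ n :=
    ((continuous_circleMap 0 r).inv₀ hz).pow n
  -- power series at radius r
  set R : NNReal := ⟨r, hr0.le⟩ with hR
  have hRr : (R : ℝ) = r := rfl
  have hd' : DifferentiableOn ℂ H (closedBall (0:ℂ) (R:ℝ)) :=
    hd.mono (closedBall_subset_ball (by rw [hRr]; exact hr1))
  have hRpos : (0 : NNReal) < R := by
    rw [← NNReal.coe_pos, hRr]; exact hr0
  have hps := DifferentiableOn.hasFPowerSeriesOnBall hd' hRpos
  have hiter : iteratedDeriv n H 0 = (n.factorial : ℂ) * (cauchyPowerSeries H 0 r).coeff n :=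
    myCoeffDeriv hps n
  set A : ℂ := ∫ θ in (0:ℝ)..2 * Real.pi, (circleMap 0 r θ)⁻¹ ^ n * H (circleMap 0 r θ) with hA
  have hcoeff : (cauchyPowerSeries H 0 r).coeff n = ((2 * Real.pi : ℝ) : ℂ)⁻¹ * A :=
    myCauchyCoeff H hr0 n
  -- rewrite A using the real part
  have hA2 : A = ∫ θ in (0:ℝ)..2 * Real.pi,
      (circleMap 0 r θ)⁻¹ ^ n * (((2 * ((H (circleMap 0 r θ)).re - ζ) : ℝ)) : ℂ) := by
    have hint1 : IntervalIntegrable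
        (fun θ : ℝ => (circleMap 0 r θ)⁻¹ ^ n * H (circleMap 0 r θ))
        MeasureTheory.volume 0 (2 * Real.pi) := (hInv.mul hHc).intervalIntegrable _ _
    have hint2 : IntervalIntegrable
        (fun θ : ℝ => (circleMap 0 r θ)⁻¹ ^ n * (starRingEnd ℂ) (H (circleMap 0 r θ)))
        MeasureTheory.volume 0 (2 * Real.pi) :=
      (hInv.mul (Complex.continuous_conj.comp hHc)).intervalIntegrable _ _
    have hint3 : IntervalIntegrable
        (fun θ : ℝ => ((2 * ζ : ℝ) : ℂ) * (circleMap 0 r θ)⁻¹ ^ n)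
        MeasureTheory.volume 0 (2 * Real.pi) :=
      (continuous_const.mul hInv).intervalIntegrable _ _
    have heq : ∀ θ : ℝ, (circleMap 0 r θ)⁻¹ ^ n * (((2 * ((H (circleMap 0 r θ)).re - ζ) : ℝ)) : ℂ)
        = (circleMap 0 r θ)⁻¹ ^ n * H (circleMap 0 r θ)
          + (circleMap 0 r θ)⁻¹ ^ n * (starRingEnd ℂ) (H (circleMap 0 r θ))
          - ((2 * ζ : ℝ) : ℂ) * (circleMap 0 r θ)⁻¹ ^ n := by
      intro θ
      have hadd : H (circleMap 0 r θ) + (starRingEnd ℂ) (H (circleMap 0 r θ))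
          = ((2 * (H (circleMap 0 r θ)).re : ℝ) : ℂ) := by
        rw [Complex.add_conj]
      have : (((2 * ((H (circleMap 0 r θ)).re - ζ) : ℝ)) : ℂ)
          = (H (circleMap 0 r θ) + (starRingEnd ℂ) (H (circleMap 0 r θ))) - ((2 * ζ : ℝ) : ℂ) := by
        rw [hadd]
        push_cast
        ring
      rw [this]
      ring
    rw [intervalIntegral.integral_congr (g := fun θ : ℝ =>
        (circleMap 0 r θ)⁻¹ ^ n * H (circleMap 0 r θ)
          + (circleMap 0 r θ)⁻¹ ^ n * (starRingEnd ℂ) (H (circleMap 0 r θ))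
          - ((2 * ζ : ℝ) : ℂ) * (circleMap 0 r θ)⁻¹ ^ n) (fun θ _ => heq θ)]
    rw [intervalIntegral.integral_sub (hint1.add hint2) hint3,
        intervalIntegral.integral_add hint1 hint2,
        intervalIntegral.integral_const_mul]
    rw [myConjInt H hr0 hr1 hd n hn, myExpInt hr0 n hn]
    simp [hA]
  -- the real-part integral
  have hre_int : (∫ θ in (0:ℝ)..2 * Real.pi, (H (circleMap 0 r θ)).re) = 2 * Real.pi := by
    have h := ContinuousLinearMap.intervalIntegral_comp_comm Complex.reCLM
      (hHc.intervalIntegrable (μ := MeasureTheory.volume) 0 (2 * Real.pi))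
    simp only [Complex.reCLM_apply] at h
    rw [h, myMean H hr0 hr1 hd hH0, Complex.ofReal_re]
  -- norm bound
  have hnormA : ‖A‖ ≤ (r ^ n)⁻¹ * (4 * Real.pi * (1 - ζ)) := by
    rw [hA2]
    have hb := intervalIntegral.norm_integral_le_integral_norm (μ := MeasureTheory.volume) (a := (0:ℝ)) (b := 2 * Real.pi)
      (f := fun θ : ℝ =>
        (circleMap 0 r θ)⁻¹ ^ n * (((2 * ((H (circleMap 0 r θ)).re - ζ) : ℝ)) : ℂ))
      (by positivity)
    refine hb.trans ?_
    have hnorm : ∀ θ : ℝ, ‖(circleMap 0 r θ)⁻¹ ^ n * (((2 * ((H (circleMap 0 r θ)).re - ζ) : ℝ)) : ℂ)‖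
        = (r ^ n)⁻¹ * (2 * ((H (circleMap 0 r θ)).re - ζ)) := by
      intro θ
      rw [norm_mul, norm_pow, norm_inv, norm_circleMap_zero, abs_of_pos hr0,
        Complex.norm_real, Real.norm_eq_abs, inv_pow]
      have h0 : 0 ≤ 2 * ((H (circleMap 0 r θ)).re - ζ) := by
        have := hRe _ (hmem θ)
        linarith
      rw [_root_.abs_of_nonneg h0]
    rw [intervalIntegral.integral_congr (g := fun θ : ℝ =>
        (r ^ n)⁻¹ * (2 * ((H (circleMap 0 r θ)).re - ζ))) (fun θ _ => hnorm θ)]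
    have hreC : Continuous fun θ : ℝ => (H (circleMap 0 r θ)).re :=
      Complex.continuous_re.comp hHc
    rw [intervalIntegral.integral_const_mul]
    have : (∫ θ in (0:ℝ)..2 * Real.pi, 2 * ((H (circleMap 0 r θ)).re - ζ))
        = 2 * ((∫ θ in (0:ℝ)..2 * Real.pi, (H (circleMap 0 r θ)).re) - ζ * (2 * Real.pi)) := by
      rw [intervalIntegral.integral_const_mul, intervalIntegral.integral_sub
        (hreC.intervalIntegrable _ _) (intervalIntegrable_const)]
      simp [mul_comm]
    rw [this, hre_int]
    have hrn : (0:ℝ) < (r ^ n)⁻¹ := by positivity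
    apply le_of_eq
    ring
  -- put everything together
  rw [hiter, hcoeff]
  rw [norm_mul, norm_mul]
  have h1 : ‖((n.factorial : ℂ))‖ = (n.factorial : ℝ) := by
    rw [Complex.norm_natCast]
  have h2 : ‖(((2 * Real.pi : ℝ) : ℂ)⁻¹)‖ = (2 * Real.pi)⁻¹ := by
    rw [norm_inv, Complex.norm_real, Real.norm_eq_abs, _root_.abs_of_pos (by positivity)]
  rw [h1, h2]
  have hπ : (0:ℝ) < Real.pi := Real.pi_pos
  have hrn : (0:ℝ) < r ^ n := by positivity
  calc (n.factorial : ℝ) * ((2 * Real.pi)⁻¹ * ‖A‖)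
      ≤ (n.factorial : ℝ) * ((2 * Real.pi)⁻¹ * ((r ^ n)⁻¹ * (4 * Real.pi * (1 - ζ)))) := by
        have hf : (0:ℝ) ≤ (n.factorial : ℝ) := by positivity
        apply mul_le_mul_of_nonneg_left _ hf
        apply mul_le_mul_of_nonneg_left hnormA (by positivity)
    _ = (n.factorial : ℝ) * (2 * (1 - ζ)) / r ^ n := by
        field_simp
        ring

end AuxLemmas5
section AuxLemmas6

open Metric Real Filter

lemma myCarath (H : ℂ → ℂ) (hd : DifferentiableOn ℂ H (ball (0:ℂ) 1)) (hH0 : H 0 = 1)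
    (ζ : ℝ) (hζ1 : ζ ≤ 1) (hRe : ∀ z ∈ ball (0:ℂ) 1, ζ ≤ (H z).re) (n : ℕ) (hn : 1 ≤ n) :
    ‖iteratedDeriv n H 0‖ ≤ (n.factorial : ℝ) * (2 * (1 - ζ)) := by
  set C : ℝ := (n.factorial : ℝ) * (2 * (1 - ζ)) with hC
  have htend : Tendsto (fun r : ℝ => C / r ^ n) (nhdsWithin 1 (Set.Iio 1)) (nhds C) := by
    have h1 : Tendsto (fun r : ℝ => C / r ^ n) (nhds 1) (nhds (C / 1 ^ n)) :=
      tendsto_const_nhds.div ((continuous_pow n).tendsto 1) (by norm_num)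
    simpa using h1.mono_left nhdsWithin_le_nhds
  apply ge_of_tendsto htend
  filter_upwards [Ioo_mem_nhdsLT_of_mem (show (1:ℝ) ∈ Set.Ioc 0 1 by constructor <;> norm_num)]
    with r hr
  exact myCarathR H hd hH0 ζ hRe n hn hr.1 hr.2

lemma myKey (lam al be : ℝ) (ζ : ℝ) (hζ0 : 0 ≤ ζ) (hζ1 : ζ < 1)
    (f : ℂ → ℂ) (a : ℕ → ℂ) (hfa : IsInA f a)
    (hnv : ∀ z ∈ unitDisk, z ≠ 0 → Dop lam al be 0 0 a z ≠ 0)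
    (hsub : Subord (bazFun 0 (Dop lam al be 0 0 a))
      (fun z : ℂ => (1 + (1 - 2 * (ζ : ℂ)) * z) / (1 - z))) :
    ‖a 2‖ ≤ 2 * (1 - ζ) ∧ ‖2 * a 3 - a 2 ^ 2‖ ≤ 2 * (1 - ζ) := by
  obtain ⟨u, hu_an, hu0, hu_lt, hsub_eq⟩ := hsub
  set H : ℂ → ℂ := fun z => (1 + (1 - 2 * (ζ:ℂ)) * u z) / (1 - u z) with hHdef
  have hden : ∀ z ∈ unitDisk, 1 - u z ≠ 0 := by
    intro z hz h
    have h1 : u z = 1 := by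
      have := sub_eq_zero.mp h
      exact this.symm
    have := hu_lt z hz
    rw [h1] at this
    simp at this
  have hH_an : AnalyticOnNhd ℂ H unitDisk :=
    (analyticOnNhd_const.add (analyticOnNhd_const.mul hu_an)).div
      (analyticOnNhd_const.sub hu_an) hden
  have hH0 : H 0 = 1 := by simp [hHdef, hu0]
  have hRe : ∀ z ∈ unitDisk, ζ ≤ (H z).re := by
    intro z hz
    have hw : ‖u z‖ < 1 := hu_lt z hz
    have hd0 : (1 : ℂ) - u z ≠ 0 := hden z hz
    have hkey : H z - (ζ:ℂ) = ((1 - ζ : ℝ) : ℂ) * ((1 + u z) / (1 - u z)) := by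
      rw [hHdef]
      field_simp
      push_cast
      ring
    have hre : 0 ≤ ((1 + u z) / (1 - u z)).re := by
      rw [Complex.div_re]
      have hnsq : 0 < Complex.normSq (1 - u z) := Complex.normSq_pos.mpr hd0
      have h1 : Complex.normSq (u z) < 1 := by
        rw [← Complex.sq_norm]
        nlinarith [norm_nonneg (u z)]
      have hnum : (1 + u z).re * (1 - u z).re + (1 + u z).im * (1 - u z).im
          = 1 - Complex.normSq (u z) := by
        simp [Complex.add_re, Complex.sub_re, Complex.add_im, Complex.sub_im, Complex.normSq_apply]
        ring
      rw [← add_div, hnum]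
      exact div_nonneg (by linarith) hnsq.le
    have : 0 ≤ (H z - (ζ:ℂ)).re := by
      rw [hkey, Complex.re_ofReal_mul]
      exact mul_nonneg (by linarith) hre
    simpa [Complex.sub_re, Complex.ofReal_re] using this
  have hDopEq : ∀ z ∈ unitDisk, Dop lam al be 0 0 a z = f z := fun z hz =>
    myDop_eq lam al be a hfa.2.1 hfa.2.2.1 (hfa.2.2.2 z hz)
  have hopen : IsOpen unitDisk := isOpen_ball
  have hEq : ∀ z ∈ unitDisk, H z * f z = z * deriv f z := by
    intro z hz
    by_cases hz0 : z = 0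
    · subst hz0
      rw [myF_zero f a hfa]
      simp
    · have hb := hsub_eq z hz
      rw [bazFun] at hb
      simp only [if_neg hz0] at hb
      rw [Complex.ofReal_zero, Complex.cpow_zero, mul_one] at hb
      have hder : deriv (Dop lam al be 0 0 a) z = deriv f z := by
        apply Filter.EventuallyEq.deriv_eq
        filter_upwards [hopen.mem_nhds hz] with w hw using hDopEq w hw
      rw [hder, hDopEq z hz] at hb
      have hfz : f z ≠ 0 := by
        rw [← hDopEq z hz]
        exact hnv z hz hz0
      have hb' : H z = z * deriv f z / f z := hb.symm
      rw [hb']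
      field_simp
  -- analyticity of derivatives
  have hf_an : AnalyticOnNhd ℂ f unitDisk := hfa.1
  have hf1_an : AnalyticOnNhd ℂ (deriv f) unitDisk := hf_an.deriv
  have hf2_an : AnalyticOnNhd ℂ (deriv (deriv f)) unitDisk := hf1_an.deriv
  have hf3_an : AnalyticOnNhd ℂ (deriv (deriv (deriv f))) unitDisk := hf2_an.deriv
  have hH1_an : AnalyticOnNhd ℂ (deriv H) unitDisk := hH_an.deriv
  have hH2_an : AnalyticOnNhd ℂ (deriv (deriv H)) unitDisk := hH1_an.deriv
  have h0mem : (0:ℂ) ∈ unitDisk := mem_ball_self one_pos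
  have step1 : ∀ z ∈ unitDisk, deriv H z * f z + H z * deriv f z
      = deriv f z + z * deriv (deriv f) z := by
    intro z hz
    have hev : (fun w => H w * f w) =ᶠ[nhds z] fun w => w * deriv f w := by
      filter_upwards [hopen.mem_nhds hz] with w hw using hEq w hw
    have hd := hev.deriv_eq
    rw [deriv_fun_mul ((hH_an z hz).differentiableAt) ((hf_an z hz).differentiableAt),
        deriv_fun_mul differentiableAt_fun_id ((hf1_an z hz).differentiableAt)] at hd
    simpa using hd
  have step2 : ∀ z ∈ unitDisk,
      deriv (deriv H) z * f z + 2 * (deriv H z * deriv f z) + H z * deriv (deriv f) z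
      = 2 * deriv (deriv f) z + z * deriv (deriv (deriv f)) z := by
    intro z hz
    have hev : (fun w => deriv H w * f w + H w * deriv f w)
        =ᶠ[nhds z] fun w => deriv f w + w * deriv (deriv f) w := by
      filter_upwards [hopen.mem_nhds hz] with w hw using step1 w hw
    have hd := hev.deriv_eq
    rw [deriv_fun_add (((hH1_an z hz).differentiableAt).fun_mul ((hf_an z hz).differentiableAt))
        (((hH_an z hz).differentiableAt).fun_mul ((hf1_an z hz).differentiableAt)),
        deriv_fun_mul ((hH1_an z hz).differentiableAt) ((hf_an z hz).differentiableAt),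
        deriv_fun_mul ((hH_an z hz).differentiableAt) ((hf1_an z hz).differentiableAt),
        deriv_fun_add ((hf1_an z hz).differentiableAt)
          (differentiableAt_fun_id.fun_mul ((hf2_an z hz).differentiableAt)),
        deriv_fun_mul differentiableAt_fun_id ((hf2_an z hz).differentiableAt)] at hd
    simp only [deriv_id''] at hd
    linear_combination hd
  have hd3 : deriv (fun w => deriv (deriv H) w * f w + 2 * (deriv H w * deriv f w)
        + H w * deriv (deriv f) w) 0
      = deriv (fun w => 2 * deriv (deriv f) w + w * deriv (deriv (deriv f)) w) 0 := by
    apply Filter.EventuallyEq.deriv_eq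
    filter_upwards [hopen.mem_nhds h0mem] with w hw using step2 w hw
  rw [deriv_fun_add ((((hH2_an 0 h0mem).differentiableAt).fun_mul
        ((hf_an 0 h0mem).differentiableAt)).fun_add
        ((differentiableAt_const 2).fun_mul (((hH1_an 0 h0mem).differentiableAt).fun_mul
          ((hf1_an 0 h0mem).differentiableAt))))
      (((hH_an 0 h0mem).differentiableAt).fun_mul ((hf2_an 0 h0mem).differentiableAt)),
      deriv_fun_add (((hH2_an 0 h0mem).differentiableAt).fun_mul ((hf_an 0 h0mem).differentiableAt))
        ((differentiableAt_const 2).fun_mul (((hH1_an 0 h0mem).differentiableAt).fun_mul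
          ((hf1_an 0 h0mem).differentiableAt))),
      deriv_fun_mul ((hH2_an 0 h0mem).differentiableAt) ((hf_an 0 h0mem).differentiableAt),
      deriv_const_mul 2 (((hH1_an 0 h0mem).differentiableAt).fun_mul
        ((hf1_an 0 h0mem).differentiableAt)),
      deriv_fun_mul ((hH1_an 0 h0mem).differentiableAt) ((hf1_an 0 h0mem).differentiableAt),
      deriv_fun_mul ((hH_an 0 h0mem).differentiableAt) ((hf2_an 0 h0mem).differentiableAt),
      deriv_fun_add ((differentiableAt_const 2).fun_mul ((hf2_an 0 h0mem).differentiableAt))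
        (differentiableAt_fun_id.fun_mul ((hf3_an 0 h0mem).differentiableAt)),
      deriv_const_mul 2 ((hf2_an 0 h0mem).differentiableAt),
      deriv_fun_mul differentiableAt_fun_id ((hf3_an 0 h0mem).differentiableAt)] at hd3
  simp only [deriv_id''] at hd3
  -- coefficient values
  have hf0 : f 0 = 0 := myF_zero f a hfa
  have hf1v : deriv f 0 = 1 := by
    have h := myIterA f a hfa 1
    rw [iteratedDeriv_one] at h
    simpa [hfa.2.2.1] using h
  have hf2v : deriv (deriv f) 0 = 2 * a 2 := by
    have h := myIterA f a hfa 2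
    rw [iteratedDeriv_succ, iteratedDeriv_one] at h
    rw [h]
    norm_num [Nat.factorial]
  have hf3v : deriv (deriv (deriv f)) 0 = 6 * a 3 := by
    have h := myIterA f a hfa 3
    rw [iteratedDeriv_succ, iteratedDeriv_succ, iteratedDeriv_one] at h
    rw [h]
    norm_num [Nat.factorial]
  have e2 := step2 0 h0mem
  rw [hf0, hf1v, hH0, hf2v, hf3v] at e2
  have hX1 : deriv H 0 = a 2 := by linear_combination e2 / 2
  have e3 := hd3
  rw [hf0, hf1v, hH0, hf2v, hf3v] at e3
  have hX2 : deriv (deriv H) 0 = 2 * (2 * a 3 - a 2 ^ 2) := by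
    linear_combination e3 / 3 - 2 * a 2 * hX1
  -- Caratheodory bounds
  have hHd : DifferentiableOn ℂ H (Metric.ball (0:ℂ) 1) := hH_an.differentiableOn
  have b1 := myCarath H hHd hH0 ζ (le_of_lt hζ1) hRe 1 le_rfl
  rw [iteratedDeriv_one, hX1] at b1
  have b2 := myCarath H hHd hH0 ζ (le_of_lt hζ1) hRe 2 (by norm_num)
  rw [iteratedDeriv_succ, iteratedDeriv_one, hX2] at b2
  constructor
  · simpa using b1
  · have habs : ‖2 * (2 * a 3 - a 2 ^ 2)‖ = 2 * ‖2 * a 3 - a 2 ^ 2‖ := by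
      rw [norm_mul]
      simp
    rw [habs] at b2
    norm_num [Nat.factorial] at b2
    linarith

end AuxLemmas6
theorem cor_3_17 (α β lam : ℝ)
    (hα0 : 0 < α) (hα1 : α ≤ 1) (hβ0 : 0 < β) (hβ1 : β ≤ 1)
    (hlam : 0 ≤ lam) 
    (ζ : ℝ) (hζ0 : 0 ≤ ζ) (hζ1 : ζ < 1)
    (f g : ℂ → ℂ) (a b : ℕ → ℂ)
    (hmem : MemB lam α β 0 0 0 (fun z : ℂ => (1 + (1 - 2 * (ζ : ℂ)) * z) / (1 - z)) f g a b) :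
    ‖a 2‖ ≤ Real.sqrt (2 * (1 - ζ)) ∧
    ‖a 3‖ ≤ (1 - ζ) + 4 * (1 - ζ) ^ 2 := by
  obtain ⟨hfa, -, hgb, -, -, hb2, hb3, hnva, hnvb, hsuba, hsubb⟩ := hmem
  set B : ℝ := 2 * (1 - ζ) with hB
  have hBpos : 0 < B := by rw [hB]; linarith
  obtain ⟨k1, k2⟩ := myKey lam α β ζ hζ0 hζ1 f a hfa hnva hsuba
  obtain ⟨-, k3'⟩ := myKey lam α β ζ hζ0 hζ1 g b hgb hnvb hsubb
  have hbrw : 2 * b 3 - b 2 ^ 2 = 3 * a 2 ^ 2 - 2 * a 3 := by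
    rw [hb2, hb3]; ring
  rw [hbrw] at k3'
  -- |a 2|^2 ≤ B
  have h2a : ‖2 * a 2 ^ 2‖ ≤ 2 * B := by
    have hsum : (2:ℂ) * a 2 ^ 2 = (2 * a 3 - a 2 ^ 2) + (3 * a 2 ^ 2 - 2 * a 3) := by ring
    rw [hsum]
    calc ‖(2 * a 3 - a 2 ^ 2) + (3 * a 2 ^ 2 - 2 * a 3)‖
        ≤ ‖2 * a 3 - a 2 ^ 2‖ + ‖3 * a 2 ^ 2 - 2 * a 3‖ :=
          norm_add_le _ _
      _ ≤ B + B := add_le_add k2 k3'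
      _ = 2 * B := by ring
  have habs2 : ‖2 * a 2 ^ 2‖ = 2 * ‖a 2‖ ^ 2 := by
    rw [norm_mul, norm_pow]
    norm_num
  have ha2sq : ‖a 2‖ ^ 2 ≤ B := by
    rw [habs2] at h2a
    linarith
  constructor
  · exact Real.le_sqrt_of_sq_le ha2sq
  · have t1 : ‖(2 * a 3 - a 2 ^ 2) - (3 * a 2 ^ 2 - 2 * a 3)‖ ≤ 2 * B := by
      calc ‖(2 * a 3 - a 2 ^ 2) - (3 * a 2 ^ 2 - 2 * a 3)‖
          ≤ ‖2 * a 3 - a 2 ^ 2‖ + ‖3 * a 2 ^ 2 - 2 * a 3‖ :=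
            norm_sub_le _ _
        _ ≤ B + B := add_le_add k2 k3'
        _ = 2 * B := by ring
    have hrepr : a 3 = a 2 ^ 2 + ((2 * a 3 - a 2 ^ 2) - (3 * a 2 ^ 2 - 2 * a 3)) / 4 := by ring
    have habs4 : ‖((2 * a 3 - a 2 ^ 2) - (3 * a 2 ^ 2 - 2 * a 3)) / 4‖
        ≤ 2 * B / 4 := by
      rw [norm_div]
      have h4 : ‖(4:ℂ)‖ = 4 := by norm_num
      rw [h4]
      apply div_le_div_of_nonneg_right t1 (by norm_num) |>.trans_eq rfl
    have t2 : ‖a 3‖ ≤ ‖a 2‖ ^ 2 + 2 * B / 4 := by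
      calc ‖a 3‖
          = ‖a 2 ^ 2 + ((2 * a 3 - a 2 ^ 2) - (3 * a 2 ^ 2 - 2 * a 3)) / 4‖ := by
            rw [← hrepr]
        _ ≤ ‖a 2 ^ 2‖
            + ‖((2 * a 3 - a 2 ^ 2) - (3 * a 2 ^ 2 - 2 * a 3)) / 4‖ :=
            norm_add_le _ _
        _ ≤ ‖a 2‖ ^ 2 + 2 * B / 4 := by
            rw [norm_pow]
            exact add_le_add le_rfl habs4
    have hBb : ‖a 2‖ ^ 2 ≤ B ^ 2 := by
      have := pow_le_pow_left₀ (norm_nonneg (a 2)) k1 2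
      exact this
    rw [hB] at t2 hBb
    nlinarith [t2, hBb]
end
end

section
/- (Corollary 3.18) Suppose k = 0 and δ = 0 (so Υₙ = 1 and C(δ,n) = 1 for all n, and Df = f, Dg = g). Let 0 ≤ ζ < 1 and let f(z) = z + Σ_{n≥2} aₙ zⁿ belong to the class B_Σ(1, ζ). Then |a₂| ≤ √(2(1−ζ)/3) and |a₃| ≤ 2(1−ζ)/3 + (1−ζ)². -/
open Complex

noncomputable section

section Aux

open Metric Filter Topology

lemma mobius_lt {A w : ℂ} (hA : ‖A‖ < 1) (hw : ‖w‖ < 1) :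
    ‖w - A‖ < ‖1 - (starRingEnd ℂ) A * w‖ := by
  have key : ((Complex.normSq (1 - (starRingEnd ℂ) A * w) : ℂ) - (Complex.normSq (w - A) : ℂ))
      = ((1 : ℂ) - (Complex.normSq A : ℂ)) * ((1 : ℂ) - (Complex.normSq w : ℂ)) := by
    simp only [Complex.normSq_eq_conj_mul_self, map_sub, map_mul, map_one, Complex.conj_conj]
    ring
  have key' : Complex.normSq (1 - (starRingEnd ℂ) A * w) - Complex.normSq (w - A)
      = (1 - Complex.normSq A) * (1 - Complex.normSq w) := by
    exact_mod_cast key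
  have h1 : Complex.normSq A < 1 := by
    rw [← Complex.sq_norm]; nlinarith [norm_nonneg A]
  have h2 : Complex.normSq w < 1 := by
    rw [← Complex.sq_norm]; nlinarith [norm_nonneg w]
  have h3 : Complex.normSq (w - A) < Complex.normSq (1 - (starRingEnd ℂ) A * w) := by nlinarith
  rw [Complex.norm_def, Complex.norm_def]
  exact Real.sqrt_lt_sqrt (Complex.normSq_nonneg _) h3

lemma schwarzPick_zero {h : ℂ → ℂ} (hd : DifferentiableOn ℂ h (ball 0 1))
    (hb : ∀ z ∈ ball (0:ℂ) 1, ‖h z‖ ≤ 1) :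
    ‖deriv h 0‖ ≤ 1 - ‖h 0‖ ^ 2 := by
  have h0 : (0:ℂ) ∈ ball (0:ℂ) 1 := mem_ball_self one_pos
  by_cases hstrict : ∀ z ∈ ball (0:ℂ) 1, ‖h z‖ < 1
  · set A := h 0 with hA
    have hAlt : ‖A‖ < 1 := hstrict 0 h0
    have hden : ∀ z ∈ ball (0:ℂ) 1, (1:ℂ) - (starRingEnd ℂ) A * h z ≠ 0 := by
      intro z hz hzero
      have h1 : (starRingEnd ℂ) A * h z = 1 := by linear_combination -hzero
      have : ‖(starRingEnd ℂ) A * h z‖ = 1 := by rw [h1]; simp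
      rw [norm_mul, Complex.norm_conj] at this
      nlinarith [hstrict z hz, norm_nonneg A, norm_nonneg (h z)]
    set g : ℂ → ℂ := fun z => (h z - A) / (1 - (starRingEnd ℂ) A * h z) with hg
    have hgd : DifferentiableOn ℂ g (ball 0 1) := by
      apply DifferentiableOn.div (hd.sub_const A)
      · exact (differentiableOn_const _).sub ((differentiableOn_const _).mul hd)
      · exact hden
    have hg0 : g 0 = 0 := by simp [hg, ← hA]
    have hmaps : Set.MapsTo g (ball (0:ℂ) 1) (ball (g 0) 1) := by
      intro z hz
      rw [hg0]
      simp only [mem_ball, dist_zero_right, hg, norm_div]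
      have hlt := mobius_lt hAlt (hstrict z hz)
      have hdpos : 0 < ‖1 - (starRingEnd ℂ) A * h z‖ := by
        simpa [norm_pos_iff] using hden z hz
      exact (div_lt_one hdpos).2 hlt
    have hschwarz := Complex.norm_deriv_le_div_of_mapsTo_ball hgd (hmaps.mono_right ball_subset_closedBall) one_pos
    have hdA : HasDerivAt h (deriv h 0) 0 :=
      (hd.differentiableAt (isOpen_ball.mem_nhds h0)).hasDerivAt
    have hnum : HasDerivAt (fun z => h z - A) (deriv h 0) 0 := hdA.sub_const A
    have hden' : HasDerivAt (fun z => (1:ℂ) - (starRingEnd ℂ) A * h z)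
        (-((starRingEnd ℂ) A * deriv h 0)) 0 := by
      simpa using (hdA.const_mul ((starRingEnd ℂ) A)).const_sub 1
    have hgder : HasDerivAt g
        ((deriv h 0 * ((1:ℂ) - (starRingEnd ℂ) A * h 0)
            - (h 0 - A) * (-((starRingEnd ℂ) A * deriv h 0)))
          / ((1:ℂ) - (starRingEnd ℂ) A * h 0) ^ 2) 0 := hnum.div hden' (hden 0 h0)
    have hd0 : (1:ℂ) - (starRingEnd ℂ) A * h 0 = ((1 - Complex.normSq A : ℝ) : ℂ) := by
      rw [← hA, Complex.ofReal_sub, Complex.ofReal_one, ← Complex.normSq_eq_conj_mul_self]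
    have hgd0 : deriv g 0 = deriv h 0 / ((1 - Complex.normSq A : ℝ) : ℂ) := by
      have hne : ((1 - Complex.normSq A : ℝ) : ℂ) ≠ 0 := by rw [← hd0]; exact hden 0 h0
      rw [hgder.deriv, hd0, ← hA, sub_self, zero_mul, sub_zero, pow_two,
        mul_div_mul_right _ _ hne]
    have hnormsq : Complex.normSq A < 1 := by
      rw [← Complex.sq_norm]; nlinarith [norm_nonneg A]
    have habs : ‖deriv g 0‖ = ‖deriv h 0‖ / (1 - Complex.normSq A) := by
      rw [hgd0, norm_div, Complex.norm_real, Real.norm_eq_abs, abs_of_pos (by linarith)]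
    rw [habs] at hschwarz
    have : ‖deriv h 0‖ ≤ 1 - Complex.normSq A := by
      rw [div_le_div_iff₀ (by linarith) one_pos] at hschwarz
      linarith
    rw [Complex.sq_norm A]
    linarith
  · push_neg at hstrict
    obtain ⟨z0, hz0, hz1⟩ := hstrict
    have habs1 : ‖h z0‖ = 1 := le_antisymm (hb z0 hz0) hz1
    have hmax : IsMaxOn (norm ∘ h) (ball (0:ℂ) 1) z0 := by
      intro z hz
      simp only [Function.comp_apply, habs1]
      exact hb z hz
    have heqon := Complex.eqOn_of_isPreconnected_of_isMaxOn_norm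
      (convex_ball (0:ℂ) 1).isPreconnected isOpen_ball hd hz0 hmax
    have hev : h =ᶠ[𝓝 (0:ℂ)] fun _ => h z0 :=
      Filter.eventuallyEq_of_mem (isOpen_ball.mem_nhds h0) heqon
    have hd0 : deriv h 0 = 0 := by rw [hev.deriv_eq]; simp
    have hh0 : h 0 = h z0 := heqon h0
    rw [hd0, hh0, habs1]
    simp

lemma schwarz_coeffs {u : ℂ → ℂ} (hu : AnalyticOnNhd ℂ u unitDisk) (hu0 : u 0 = 0)
    (hub : ∀ z ∈ unitDisk, ‖u z‖ < 1) :
    ∃ c1 c2 : ℂ, deriv u 0 = c1 ∧ deriv (deriv u) 0 = 2 * c2 ∧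
      ‖c1‖ ≤ 1 ∧ ‖c2 + c1 ^ 2‖ ≤ 1 := by
  rw [show unitDisk = ball (0:ℂ) 1 from rfl] at hu hub
  have h0 : (0:ℂ) ∈ ball (0:ℂ) 1 := mem_ball_self one_pos
  have hud : DifferentiableOn ℂ u (ball 0 1) := fun z hz =>
    (hu z hz).differentiableAt.differentiableWithinAt
  obtain ⟨q, hq⟩ := hu 0 h0
  have hdsl : HasFPowerSeriesAt (dslope u 0) q.fslope 0 := hq.has_fpower_series_dslope_fslope
  have hderh : deriv (dslope u 0) 0 = q.coeff 2 := by
    have h1 : q.fslope.coeff 1 = q.coeff 2 := FormalMultilinearSeries.coeff_fslope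
    rw [hdsl.deriv]; exact h1
  have hval : dslope u 0 0 = deriv u 0 := dslope_same _ _
  obtain ⟨r, hball⟩ := hq
  have hfact := hball.factorial_smul (1:ℂ) 2
  have hq2 : q 2 (fun _ => (1:ℂ)) = q.coeff 2 := rfl
  have hitfd : iteratedFDeriv ℂ 2 u 0 (fun _ => (1:ℂ)) = iteratedDeriv 2 u 0 := by
    rw [iteratedDeriv_eq_iteratedFDeriv]
  have hit2 : iteratedDeriv 2 u 0 = deriv (deriv u) 0 := by
    rw [iteratedDeriv_succ, iteratedDeriv_one]
  have hdd : deriv (deriv u) 0 = 2 * q.coeff 2 := by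
    rw [← hit2, ← hitfd, ← hfact, hq2]
    simp [Nat.factorial]
  have hmaps : Set.MapsTo u (ball (0:ℂ) 1) (ball (u 0) 1) := by
    intro z hz
    rw [hu0]
    simpa [mem_ball, dist_zero_right] using hub z hz
  have hdslb : ∀ z ∈ ball (0:ℂ) 1, ‖dslope u 0 z‖ ≤ 1 := by
    intro z hz
    have := Complex.norm_dslope_le_div_of_mapsTo_ball hud (hmaps.mono_right ball_subset_closedBall) hz
    simpa using this
  have hdsld : DifferentiableOn ℂ (dslope u 0) (ball 0 1) :=
    (differentiableOn_dslope (isOpen_ball.mem_nhds h0)).mpr hud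
  have hsp := schwarzPick_zero hdsld hdslb
  rw [hderh, hval] at hsp
  refine ⟨deriv u 0, q.coeff 2, rfl, hdd, ?_, ?_⟩
  · have := hdslb 0 h0
    rwa [hval] at this
  · calc ‖q.coeff 2 + deriv u 0 ^ 2‖
        ≤ ‖q.coeff 2‖ + ‖deriv u 0 ^ 2‖ := norm_add_le _ _
      _ ≤ (1 - ‖deriv u 0‖ ^ 2) + ‖deriv u 0‖ ^ 2 := by
          rw [norm_pow]; exact add_le_add hsp le_rfl
      _ = 1 := by ring

lemma hasFPSOB {f : ℂ → ℂ} {a : ℕ → ℂ} (hf : IsInA f a) :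
    HasFPowerSeriesOnBall f (FormalMultilinearSeries.ofScalars ℂ a) 0 1 := by
  obtain ⟨hfa, ha0, ha1, hsum⟩ := hf
  have hmem : ∀ y : ℂ, y ∈ EMetric.ball (0:ℂ) 1 → y ∈ unitDisk := by
    intro y hy
    replace hy : edist y 0 < 1 := hy
    rw [edist_zero_right, enorm_eq_nnnorm] at hy
    simpa [unitDisk, mem_ball, dist_zero_right, ← NNReal.coe_lt_one] using
      (by exact_mod_cast hy : ‖y‖₊ < (1:NNReal))
  refine ⟨?_, one_pos, ?_⟩
  · apply ENNReal.le_of_forall_nnreal_lt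
    intro r hr
    have hr1 : (r:ℝ) < 1 := by exact_mod_cast hr
    have hr0 : (0:ℝ) ≤ r := r.coe_nonneg
    set s : ℝ := ((r:ℝ) + 1) / 2 with hs
    have hs0 : 0 < s := by positivity
    have hrs : (r:ℝ) < s := by rw [hs]; linarith
    have hs1 : s < 1 := by rw [hs]; linarith
    have hz : (s:ℂ) ∈ unitDisk := by
      simp only [unitDisk, mem_ball, dist_zero_right, Complex.norm_real, Real.norm_eq_abs]
      rw [abs_of_pos hs0]; exact hs1
    have htend : Tendsto (fun n => ‖a n‖ * s ^ n) atTop (𝓝 0) := by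
      have h1 : Tendsto (fun n => a n * (s:ℂ) ^ n) atTop (𝓝 0) :=
        (hsum (s:ℂ) hz).summable.tendsto_atTop_zero
      have h2 := h1.norm
      simp only [norm_zero] at h2
      convert h2 using 2 with n
      rw [norm_mul, norm_pow, Complex.norm_real, Real.norm_eq_abs, abs_of_pos hs0]
    apply FormalMultilinearSeries.le_radius_of_tendsto _ (l := 0)
    have hb : ∀ n : ℕ, ‖FormalMultilinearSeries.ofScalars ℂ a n‖ * (r:ℝ) ^ n ≤ ‖a n‖ * s ^ n := by
      intro n
      rw [FormalMultilinearSeries.ofScalars_norm]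
      have : (r:ℝ) ^ n ≤ s ^ n := pow_le_pow_left₀ hr0 hrs.le n
      exact mul_le_mul_of_nonneg_left this (norm_nonneg _)
    exact squeeze_zero (fun n => by positivity) hb htend
  · intro y hy
    have hy' := hmem y hy
    have hssum := hsum y hy'
    simp only [FormalMultilinearSeries.ofScalars_apply_eq, smul_eq_mul, zero_add]
    exact hssum

lemma iter_deriv_coeff {f : ℂ → ℂ} {a : ℕ → ℂ} (hf : IsInA f a) (n : ℕ) :
    iteratedDeriv n f 0 = (n.factorial : ℂ) * a n := by
  have hball := hasFPSOB hf
  have hfact := hball.factorial_smul (1:ℂ) n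
  have hp : (FormalMultilinearSeries.ofScalars ℂ a) n (fun _ => (1:ℂ)) = a n := by
    rw [FormalMultilinearSeries.ofScalars_apply_eq]
    simp
  rw [iteratedDeriv_eq_iteratedFDeriv, ← hfact, hp]
  simp [nsmul_eq_mul]

lemma Dop_eq {lam al be : ℝ} {f : ℂ → ℂ} {a : ℕ → ℂ} (hf : IsInA f a) :
    ∀ z ∈ unitDisk, Dop lam al be 0 0 a z = f z := by
  intro z hz
  obtain ⟨hfa, ha0, ha1, hsum⟩ := hf
  have hs := hsum z hz
  have he : HasSum (fun n => if n = 1 then z else 0) z := hasSum_ite_eq 1 z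
  have hg : HasSum (fun n => if 2 ≤ n then a n * z ^ n else 0) (f z - z) := by
    have hfun : (fun n => if 2 ≤ n then a n * z ^ n else 0)
        = fun n => a n * z ^ n - (if n = 1 then z else 0) := by
      funext n
      match n with
      | 0 => simp [ha0]
      | 1 => simp [ha1]
      | (m+2) => simp [Nat.succ_le_succ, Nat.le_add_left]
    rw [hfun]
    exact hs.sub he
  have hterm : ∀ n : ℕ,
      (if 2 ≤ n then (Ups lam al be 0 n : ℂ) * (Cdel 0 n : ℂ) * a n * z ^ n else 0)
      = (if 2 ≤ n then a n * z ^ n else 0) := by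
    intro n
    by_cases h2 : 2 ≤ n
    · simp only [if_pos h2]
      have hU : Ups lam al be 0 n = 1 := pow_zero _
      have hC : Cdel 0 n = 1 := by
        unfold Cdel
        have hn : (0:ℝ) < (n:ℝ) := by exact_mod_cast Nat.lt_of_lt_of_le two_pos h2
        rw [add_zero, zero_add, Real.Gamma_one, mul_one,
          div_self (Real.Gamma_pos_of_pos hn).ne']
      rw [hU, hC]
      push_cast
      ring
    · simp [h2]
  unfold Dop
  rw [tsum_congr hterm, hg.tsum_eq]
  ring

lemma key_sub (ζ : ℝ) {lam al be : ℝ} {f : ℂ → ℂ} {a : ℕ → ℂ} (hf : IsInA f a)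
    (hnz : ∀ z ∈ unitDisk, z ≠ 0 → Dop lam al be 0 0 a z ≠ 0)
    (hsub : Subord (bazFun 1 (Dop lam al be 0 0 a))
      (fun z : ℂ => (1 + (1 - 2 * (ζ:ℂ)) * z) / (1 - z))) :
    ∃ e1 e2 : ℂ, ‖e1‖ ≤ 1 ∧ ‖e2‖ ≤ 1 ∧
      a 2 = ((1 - ζ : ℝ) : ℂ) * e1 ∧ 3 * a 3 = 2 * ((1 - ζ : ℝ) : ℂ) * e2 := by
  obtain ⟨u, hu, hu0, hub, heq⟩ := hsub
  have h0 : (0:ℂ) ∈ unitDisk := mem_ball_self one_pos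
  have hopen : IsOpen unitDisk := isOpen_ball
  have hDeq : Set.EqOn (Dop lam al be 0 0 a) f unitDisk := fun z hz => Dop_eq hf z hz
  have hAan : AnalyticOnNhd ℂ (deriv f) unitDisk := hf.1.deriv
  have hA2an : AnalyticOnNhd ℂ (deriv (deriv f)) unitDisk := hAan.deriv
  have hd1 : deriv f 0 = 1 := by
    have h := iter_deriv_coeff hf 1
    rw [iteratedDeriv_one] at h
    rw [h, hf.2.2.1]
    simp
  have hd2 : deriv (deriv f) 0 = 2 * a 2 := by
    have h := iter_deriv_coeff hf 2
    rw [iteratedDeriv_succ, iteratedDeriv_one] at h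
    simpa [Nat.factorial] using h
  have hd3 : deriv (deriv (deriv f)) 0 = 6 * a 3 := by
    have h := iter_deriv_coeff hf 3
    rw [iteratedDeriv_succ, iteratedDeriv_succ, iteratedDeriv_one] at h
    have : ((Nat.factorial 3 : ℕ) : ℂ) = 6 := by norm_num [Nat.factorial]
    rw [this] at h
    exact h
  have hder : ∀ z ∈ unitDisk, deriv (Dop lam al be 0 0 a) z = deriv f z := fun z hz =>
    Filter.EventuallyEq.deriv_eq (Filter.eventuallyEq_of_mem (hopen.mem_nhds hz) hDeq)
  set κ : ℂ := 1 - 2 * (ζ:ℂ) with hκ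
  have hid : ∀ z ∈ unitDisk, deriv f z = (1 + κ * u z) / (1 - u z) := by
    intro z hz
    have hb := heq z hz
    by_cases hz0 : z = 0
    · subst hz0
      rw [hu0, hd1]
      simp
    · have hbz : bazFun 1 (Dop lam al be 0 0 a) z = deriv (Dop lam al be 0 0 a) z := by
        unfold bazFun
        rw [if_neg hz0, Complex.ofReal_one, Complex.cpow_one]
        have hFz := hnz z hz hz0
        field_simp
      rw [← hder z hz, ← hbz, hb]
  have hune : ∀ z ∈ unitDisk, (1:ℂ) - u z ≠ 0 := by
    intro z hz h
    have h1 : u z = 1 := by linear_combination -h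
    have h2 := hub z hz
    rw [h1] at h2
    simp at h2
  have hid2 : ∀ z ∈ unitDisk, deriv f z - 1 = u z * (κ + deriv f z) := by
    intro z hz
    have h1 := hid z hz
    rw [eq_div_iff (hune z hz)] at h1
    linear_combination h1
  obtain ⟨c1, c2, hc1, hc2, hb1, hb2⟩ := schwarz_coeffs hu hu0 hub
  have hD1 : ∀ z ∈ unitDisk,
      deriv (deriv f) z = deriv u z * (κ + deriv f z) + u z * deriv (deriv f) z := by
    intro z hz
    have e1 := (Filter.eventuallyEq_of_mem (hopen.mem_nhds hz) hid2).deriv_eq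
    have hu' : HasDerivAt u (deriv u z) z := (hu z hz).differentiableAt.hasDerivAt
    have hA' : HasDerivAt (deriv f) (deriv (deriv f) z) z :=
      (hAan z hz).differentiableAt.hasDerivAt
    have hrhs : HasDerivAt (fun w => u w * (κ + deriv f w))
        (deriv u z * (κ + deriv f z) + u z * deriv (deriv f) z) z := hu'.mul (hA'.const_add κ)
    rw [deriv_sub_const, hrhs.deriv] at e1
    exact e1
  have ha2 : 2 * a 2 = c1 * (κ + 1) := by
    have h := hD1 0 h0
    rw [hu0, hd1, hd2, hc1] at h
    linear_combination h
  have hD2 : 6 * a 3 = (2 * c2) * (κ + 1) + 2 * (c1 * (2 * a 2)) := by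
    have e2 := (Filter.eventuallyEq_of_mem (hopen.mem_nhds h0) hD1).deriv_eq
    have hu'0 : HasDerivAt u (deriv u 0) 0 := (hu 0 h0).differentiableAt.hasDerivAt
    have hu''0 : HasDerivAt (deriv u) (deriv (deriv u) 0) 0 :=
      ((hu.deriv) 0 h0).differentiableAt.hasDerivAt
    have hA'0 : HasDerivAt (deriv f) (deriv (deriv f) 0) 0 :=
      (hAan 0 h0).differentiableAt.hasDerivAt
    have hA''0 : HasDerivAt (deriv (deriv f)) (deriv (deriv (deriv f)) 0) 0 :=
      (hA2an 0 h0).differentiableAt.hasDerivAt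
    have hrhs : HasDerivAt
        (fun w => deriv u w * (κ + deriv f w) + u w * deriv (deriv f) w)
        ((deriv (deriv u) 0 * (κ + deriv f 0) + deriv u 0 * deriv (deriv f) 0)
          + (deriv u 0 * deriv (deriv f) 0 + u 0 * deriv (deriv (deriv f)) 0)) 0 :=
      (hu''0.mul (hA'0.const_add κ)).add (hu'0.mul hA''0)
    rw [hrhs.deriv, hu0, hd1, hd2, hc1, hc2] at e2
    linear_combination e2 - hd3
  refine ⟨c1, c2 + c1 ^ 2, hb1, hb2, ?_, ?_⟩
  · push_cast
    linear_combination ha2 / 2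
  · push_cast
    linear_combination hD2 / 2 + c1 * ha2
end Aux

theorem cor_3_18 (α β lam : ℝ)
    (hα0 : 0 < α) (hα1 : α ≤ 1) (hβ0 : 0 < β) (hβ1 : β ≤ 1)
    (hlam : 0 ≤ lam) 
    (ζ : ℝ) (hζ0 : 0 ≤ ζ) (hζ1 : ζ < 1)
    (f g : ℂ → ℂ) (a b : ℕ → ℂ)
    (hmem : MemB lam α β 0 0 1 (fun z : ℂ => (1 + (1 - 2 * (ζ : ℂ)) * z) / (1 - z)) f g a b) :
    ‖a 2‖ ≤ Real.sqrt (2 * (1 - ζ) / 3) ∧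
    ‖a 3‖ ≤ 2 * (1 - ζ) / 3 + (1 - ζ) ^ 2 := by
  obtain ⟨hfA, hinjf, hgA, hinjg, hinv, hbb2, hbb3, hnza, hnzb, hsubf, hsubg⟩ := hmem
  obtain ⟨e1, e2, he1, he2, hA2, hA3⟩ := key_sub ζ hfA hnza hsubf
  obtain ⟨d1, d2, hd1b, hd2b, hB2, hB3⟩ := key_sub ζ hgA hnzb hsubg
  set t : ℝ := 1 - ζ with ht
  have ht0 : 0 < t := by simp [ht]; linarith
  have h6 : 6 * a 2 ^ 2 = 2 * ((t:ℝ):ℂ) * (e2 + d2) := by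
    rw [hbb3] at hB3
    linear_combination hA3 + hB3
  have habs2 : ‖a 2‖ ^ 2 ≤ 2 * t / 3 := by
    have hsq : a 2 ^ 2 = ((t:ℝ):ℂ) * (e2 + d2) / 3 := by linear_combination h6 / 6
    have habse : ‖a 2‖ ^ 2 = t * ‖e2 + d2‖ / 3 := by
      rw [← norm_pow, hsq, norm_div, norm_mul, Complex.norm_real, Real.norm_eq_abs, abs_of_pos ht0]
      norm_num
    rw [habse]
    have hsum2 : ‖e2 + d2‖ ≤ 2 :=
      (norm_add_le _ _).trans (by linarith)
    calc t * ‖e2 + d2‖ / 3 ≤ t * 2 / 3 := by gcongr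
      _ = 2 * t / 3 := by ring
  constructor
  · have h1 : ‖a 2‖ = Real.sqrt (‖a 2‖ ^ 2) :=
      (Real.sqrt_sq (norm_nonneg _)).symm
    rw [h1]
    apply Real.sqrt_le_sqrt
    simpa [ht] using habs2
  · have h3 : 3 * a 3 - 3 * a 2 ^ 2 = ((t:ℝ):ℂ) * (e2 - d2) := by
      linear_combination hA3 - h6 / 2
    have ha3 : a 3 = a 2 ^ 2 + ((t:ℝ):ℂ) * (e2 - d2) / 3 := by
      linear_combination h3 / 3
    have hd : ‖e2 - d2‖ ≤ 2 := by
      have hns := norm_sub_le e2 d2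
      linarith
    have hsq2 : ‖a 2 ^ 2‖ ≤ t ^ 2 := by
      rw [hA2, mul_pow, norm_mul, norm_pow, norm_pow, Complex.norm_real, Real.norm_eq_abs, abs_of_pos ht0]
      have : ‖e1‖ ^ 2 ≤ 1 := by nlinarith [norm_nonneg e1]
      nlinarith [sq_nonneg t]
    calc ‖a 3‖
        ≤ ‖a 2 ^ 2‖ + ‖((t:ℝ):ℂ) * (e2 - d2) / 3‖ := by
          rw [ha3]; exact norm_add_le _ _
      _ ≤ t ^ 2 + t * 2 / 3 := by
          refine add_le_add hsq2 ?_
          rw [norm_div, norm_mul, Complex.norm_real, Real.norm_eq_abs, abs_of_pos ht0]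
          have h33 : ‖(3:ℂ)‖ = 3 := by norm_num
          rw [h33]
          gcongr
      _ = 2 * (1 - ζ) / 3 + (1 - ζ) ^ 2 := by rw [ht]; ring
end
end
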